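/- arXiv:1611.08435 — 6 statements merged into one kernel-verified Lean document; each statement's English description precedes it below -/
import Mathlib

section
/- Let (M,d) be a metric space and X a Banach space. Let α ≥ 0 and let φ : M ⇉ X be a correspondence that is non-empty-valued, closed-valued, and convex-valued, and that admits local strongly pointwise α-Lipschitz selections. If φ has a continuous selection, then for every β > α there exist a continuous selection f : M → X of φ and a set B ⊆ M that is dense in M such that f is pointwise β-Lipschitz at every point of B. -/
open Filter Metric Set

/-- `f` is pointwise `α`-Lipschitz at `b`:
`limsup_{r→0⁺} ( r⁻¹ · sup { d(f b, f a) : a ∈ closedBall b r } ) ≤ α`. -/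
noncomputable def PtwiseLipschitzAt {M X : Type*} [PseudoMetricSpace M] [PseudoMetricSpace X]
    (f : M → X) (α : ℝ) (b : M) : Prop :=
  Filter.limsup
    (fun r : ℝ => (ENNReal.ofReal r)⁻¹ * ⨆ a ∈ Metric.closedBall b r, edist (f b) (f a))
    (nhdsWithin 0 (Set.Ioi 0)) ≤ ENNReal.ofReal α

/-- `φ` admits local strongly pointwise `α`-Lipschitz selections. -/
def AdmitsLocalStronglyPtwiseLipschitzSelections {M X : Type*} [MetricSpace M]
    [NormedAddCommGroup X] (φ : M → Set X) (α : ℝ) : Prop :=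
  ∀ b : M, ∀ y ∈ φ b, ∃ U : Set M, IsOpen U ∧ b ∈ U ∧ ∃ f : M → X,
    Continuous f ∧ (∀ a, f a ∈ φ a) ∧ f b = y ∧ ∀ a ∈ U, ‖f b - f a‖ ≤ α * dist b a

/-!
Fix `2⁻ⁿ`-separated `2⁻ⁿ`-nets `Dₙ` of `M`. Starting from a continuous selection, stage `n`
changes the current selection only on small disjoint balls around the points `b ∈ Dₙ` not lying
in earlier nets: there it is replaced by a convex combination with a local `α`-Lipschitz selection
through its value at `b`, which makes it `α`-Lipschitz at `b`. The balls are so small that the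
change is at most `2⁻ⁿ` uniformly and at most `(β - α) 2⁻ⁿ⁻¹ d(x, e)` for every point `e` of an
earlier net. The selections converge uniformly to a continuous selection `f` (the values are
closed), and if `b` first appears in `Dₖ`, then `f` stays within `(β - α) d(x, b)` of the
`(k+1)`-st selection, so `f` is pointwise `β`-Lipschitz at every point of the dense set `⋃ₙ Dₙ`.
-/

open Function Topology

section Nets

variable {M : Type*} [PseudoMetricSpace M] {c : ℝ} {S : Set M}

theorem exists_pairwise_le_dist_forall_exists_dist_lt (hc : 0 < c) :
    ∃ S : Set M, S.Pairwise (c ≤ dist · ·) ∧ ∀ x, ∃ y ∈ S, dist x y < c := by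
  obtain ⟨S, hS⟩ := zorn_subset {S : Set M | S.Pairwise (c ≤ dist · ·)} fun ch hch hchain =>
    ⟨⋃₀ ch, hchain.pairwise_sUnion.2 hch, fun _ => subset_sUnion_of_mem⟩
  refine ⟨S, hS.prop, fun x => ?_⟩
  by_contra! hfar
  have hx : x ∈ S := hS.mem_of_prop_insert <| pairwise_insert.2
    ⟨hS.prop, fun y hy _ => ⟨hfar y hy, dist_comm x y ▸ hfar y hy⟩⟩
  have := hfar x hx
  rw [dist_self] at this
  linarith

theorem subsingleton_inter_ball_of_pairwise_le_dist (hS : S.Pairwise (c ≤ dist · ·)) (x : M) :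
    (S ∩ ball x (c / 2)).Subsingleton := by
  rintro y ⟨hy, hyx⟩ z ⟨hz, hzx⟩
  by_contra hyz
  have := hS hy hz hyz
  have := dist_triangle_right y z x
  rw [mem_ball] at hyx hzx
  linarith

theorem locallyFinite_of_pairwise_le_dist (hc : 0 < c) (hS : S.Pairwise (c ≤ dist · ·))
    {s : M → Set M} (hs : ∀ b, ∀ y ∈ s b, b ∈ S ∧ dist y b < c / 4) : LocallyFinite s := by
  refine fun x => ⟨ball x (c / 4), ball_mem_nhds x (by positivity),
    (subsingleton_inter_ball_of_pairwise_le_dist hS x).finite.subset ?_⟩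
  rintro b ⟨y, hyb, hyx⟩
  obtain ⟨hbS, hyb⟩ := hs b y hyb
  have := dist_triangle_left b x y
  rw [mem_ball] at hyx
  exact ⟨hbS, by rw [mem_ball]; linarith [dist_comm b y]⟩

theorem dense_iUnion_of_forall_exists_dist_lt {D : ℕ → Set M} {c : ℕ → ℝ}
    (hc : Tendsto c atTop (𝓝 0)) (hD : ∀ n x, ∃ y ∈ D n, dist x y < c n) : Dense (⋃ n, D n) := by
  refine Metric.dense_iff.2 fun x r hr => ?_
  obtain ⟨n, hn⟩ := (hc.eventually (gt_mem_nhds hr)).exists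
  obtain ⟨y, hy, hxy⟩ := hD n x
  exact ⟨y, by rw [mem_ball, dist_comm]; linarith, mem_iUnion.2 ⟨n, hy⟩⟩

end Nets

theorem exists_finsum_eq_of_subsingleton_support {ι A : Type*} [AddCommMonoid A] [Nonempty ι]
    {f : ι → A} (hf : (support f).Subsingleton) : ∃ i, ∑ᶠ j, f j = f i := by
  obtain hempty | ⟨i, hi⟩ := hf.eq_empty_or_singleton
  · exact ⟨Classical.arbitrary ι, by simp [support_eq_empty_iff.1 hempty]⟩
  · refine ⟨i, finsum_eq_single f i fun j hj => notMem_support.1 fun hjf => hj ?_⟩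
    simpa [hi] using hjf

theorem exists_seq_of_forall_exists {α : Type*} {P : α → Prop} {R : ℕ → α → α → Prop} {x₀ : α}
    (h₀ : P x₀) (h : ∀ n x, P x → ∃ y, P y ∧ R n x y) :
    ∃ u : ℕ → α, (∀ n, P (u n)) ∧ ∀ n, R n (u n) (u (n + 1)) := by
  choose! next hnextP hnextR using h
  let u : ℕ → α := fun n => Nat.rec x₀ next n
  have hu : ∀ n, P (u n) := fun n => by
    induction n with
    | zero => exact h₀
    | succ n ih => exact hnextP n _ ih
  exact ⟨u, hu, fun n => hnextR n _ (hu n)⟩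

theorem dist_le_of_tendsto_of_forall_ge_le_geometric {Y : Type*} [PseudoMetricSpace Y]
    {u : ℕ → Y} {l : Y} (hu : Tendsto u atTop (𝓝 l)) {C r : ℝ} (hr : r < 1) {m : ℕ}
    (h : ∀ n ≥ m, dist (u n) (u (n + 1)) ≤ C * r ^ n) : dist (u m) l ≤ C * r ^ m / (1 - r) := by
  have hshift j : dist (u (j + m)) (u (j + 1 + m)) ≤ C * r ^ m * r ^ j := by
    simpa [add_right_comm j 1 m, pow_add, mul_assoc, mul_comm (r ^ j)] using h (j + m) (by omega)
  simpa using dist_le_of_le_geometric_of_tendsto₀ (f := fun j => u (j + m)) r (C * r ^ m) hr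
    hshift ((tendsto_add_atTop_iff_nat m).2 hu)

theorem continuous_of_forall_dist_le_of_tendsto_zero {M Y : Type*} [TopologicalSpace M]
    [PseudoMetricSpace Y] {F : ℕ → M → Y} {f : M → Y} (hF : ∀ n, Continuous (F n)) {δ : ℕ → ℝ}
    (hδ : Tendsto δ atTop (𝓝 0)) (h : ∀ n x, dist (F n x) (f x) ≤ δ n) : Continuous f := by
  refine TendstoUniformly.continuous (p := atTop) (Metric.tendstoUniformly_iff.2 fun ε hε => ?_)
    (Eventually.of_forall hF).frequently
  filter_upwards [hδ.eventually (gt_mem_nhds hε)] with n hn x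
  exact (dist_comm (f x) (F n x) ▸ h n x).trans_lt hn

theorem ptwiseLipschitzAt_of_eventually_dist_le {M X : Type*} [PseudoMetricSpace M]
    [PseudoMetricSpace X] {f : M → X} {K : ℝ} {b : M}
    (h : ∀ᶠ a in 𝓝 b, dist (f b) (f a) ≤ K * dist b a) : PtwiseLipschitzAt f K b := by
  obtain ⟨ρ, hρ, hball⟩ := Metric.eventually_nhds_iff.1 h
  refine limsup_le_of_le isCobounded_le_of_bot ?_
  filter_upwards [Ioo_mem_nhdsGT hρ] with r ⟨hr, hrρ⟩
  have hsup : ⨆ a ∈ closedBall b r, edist (f b) (f a) ≤ ENNReal.ofReal (max K 0 * r) := by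
    refine iSup₂_le fun a ha => ?_
    rw [mem_closedBall] at ha
    rw [edist_dist]
    refine ENNReal.ofReal_le_ofReal ((hball (ha.trans_lt hrρ)).trans ?_)
    rw [dist_comm]
    exact mul_le_mul (le_max_left _ _) ha dist_nonneg (le_max_right _ _)
  calc (ENNReal.ofReal r)⁻¹ * ⨆ a ∈ closedBall b r, edist (f b) (f a)
      ≤ (ENNReal.ofReal r)⁻¹ * ENNReal.ofReal (max K 0 * r) := by gcongr
    _ = ENNReal.ofReal K := by
      rw [ENNReal.ofReal_mul (le_max_right _ _), mul_comm, mul_assoc,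
        ENNReal.mul_inv_cancel (by simpa using hr) ENNReal.ofReal_ne_top, mul_one,
        ENNReal.ofReal_max, ENNReal.ofReal_zero, max_eq_left zero_le]

theorem eventually_dist_le_add_of_norm_sub_le {M X : Type*} [PseudoMetricSpace M]
    [NormedAddCommGroup X] {F f : M → X} {b : M} {α γ : ℝ}
    (hF : ∀ᶠ a in 𝓝 b, ‖F b - F a‖ ≤ α * dist b a) (hfF : ∀ a, ‖f a - F a‖ ≤ γ * dist a b) :
    ∀ᶠ a in 𝓝 b, dist (f b) (f a) ≤ (α + γ) * dist b a := by
  have hb : f b = F b := by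
    simpa [sub_eq_zero] using hfF b
  filter_upwards [hF] with a ha
  rw [dist_eq_norm, hb, dist_comm b a]
  calc ‖F b - f a‖ = ‖(F b - F a) - (f a - F a)‖ := by abel_nf
    _ ≤ ‖F b - F a‖ + ‖f a - F a‖ := norm_sub_le _ _
    _ ≤ (α + γ) * dist a b := by rw [dist_comm] at ha; linarith [hfF a]

theorem exists_continuous_tendsto_of_dist_le_geometric {M Y : Type*} [TopologicalSpace M]
    [PseudoMetricSpace Y] [CompleteSpace Y] {F : ℕ → M → Y} (hF : ∀ n, Continuous (F n))
    {C r : ℝ} (hr₀ : 0 ≤ r) (hr : r < 1) (hstep : ∀ n x, dist (F n x) (F (n + 1) x) ≤ C * r ^ n) :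
    ∃ f : M → Y, Continuous f ∧ ∀ x, Tendsto (F · x) atTop (𝓝 (f x)) := by
  choose f hf using fun x =>
    cauchySeq_tendsto_of_complete (cauchySeq_of_le_geometric r C hr (hstep · x))
  refine ⟨f, continuous_of_forall_dist_le_of_tendsto_zero hF ?_
    fun n x => dist_le_of_tendsto_of_forall_ge_le_geometric (hf x) hr fun k _ => hstep k x, hf⟩
  simpa using ((tendsto_pow_atTop_nhds_zero_of_lt_one hr₀ hr).const_mul C).div_const (1 - r)

theorem ptwiseLipschitzAt_of_tendsto {M X : Type*} [PseudoMetricSpace M] [NormedAddCommGroup X]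
    {F : ℕ → M → X} {f : M → X} (hf : ∀ x, Tendsto (F · x) atTop (𝓝 (f x))) {b : M} {m : ℕ}
    {α γ : ℝ} (hγ : 0 ≤ γ) (hlip : ∀ᶠ a in 𝓝 b, ‖F m b - F m a‖ ≤ α * dist b a)
    (htail : ∀ n ≥ m, ∀ x, ‖F (n + 1) x - F n x‖ ≤ γ * (1 / 2) ^ (n + 1) * dist x b) :
    PtwiseLipschitzAt f (α + γ) b := by
  refine ptwiseLipschitzAt_of_eventually_dist_le (eventually_dist_le_add_of_norm_sub_le hlip
    fun a => ?_)
  have := dist_le_of_tendsto_of_forall_ge_le_geometric (hf a) (C := γ / 2 * dist a b)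
    (r := 1 / 2) (by norm_num) fun n hn => by
      rw [dist_eq_norm']
      convert htail n hn a using 1
      ring
  rw [dist_eq_norm'] at this
  have hpow : ((1 : ℝ) / 2) ^ m ≤ 1 := pow_le_one₀ (by norm_num) (by norm_num)
  calc ‖f a - F m a‖ ≤ γ / 2 * dist a b * (1 / 2) ^ m / (1 - 1 / 2) := this
    _ = γ * dist a b * (1 / 2) ^ m := by ring
    _ ≤ γ * dist a b := mul_le_of_le_one_right (by positivity) hpow

section Stage

variable {M X : Type*} [MetricSpace M] [NormedAddCommGroup X] [NormedSpace ℝ X]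
  {φ : M → Set X} {α : ℝ} {g : M → X}

theorem exists_local_patch (hcv : ∀ a, Convex ℝ (φ a))
    (hloc : AdmitsLocalStronglyPtwiseLipschitzSelections φ α) (hg : Continuous g)
    (hgφ : ∀ a, g a ∈ φ a) (b : M) {R ε : ℝ} (hR : 0 < R) (hε : 0 < ε) :
    ∃ P : M → X, Continuous P ∧ (∀ a, g a + P a ∈ φ a) ∧ support P ⊆ ball b R ∧
      (∀ x, ‖P x‖ ≤ ε) ∧ ∀ᶠ a in 𝓝 b, ‖g b + P b - (g a + P a)‖ ≤ α * dist b a := by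
  obtain ⟨U, hU, hbU, h, hh, hhφ, hhb, hhlip⟩ := hloc b (g b) (hgφ b)
  obtain ⟨δ, hδ, hδU⟩ := Metric.isOpen_iff.1
    (hU.inter (isOpen_lt (hh.sub hg).norm continuous_const)) b ⟨hbU, by simpa [hhb] using hε⟩
  set δ' := min δ R
  have hδ' : 0 < δ' := lt_min hδ hR
  have hδδ' : ball b δ' ⊆ ball b δ := ball_subset_ball (min_le_left _ _)
  obtain ⟨l, hl0, hl1, hl01⟩ := exists_continuous_zero_one_of_isClosed isOpen_ball.isClosed_compl
    isClosed_closedBall (disjoint_compl_left_iff_subset.2 (closedBall_subset_ball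
      (half_lt_self hδ') : closedBall b (δ' / 2) ⊆ ball b δ'))
  refine ⟨fun x => l x • (h x - g x), l.continuous.smul (hh.sub hg),
    fun a => (hcv a).add_smul_sub_mem (hgφ a) (hhφ a) (hl01 a), ?_, fun x => ?_, ?_⟩
  · refine support_subset_iff'.2 fun x hx => ?_
    rw [hl0 fun hx' => hx (ball_subset_ball (min_le_right _ _) hx'), Pi.zero_apply, zero_smul]
  · show ‖l x • (h x - g x)‖ ≤ ε
    by_cases hx : x ∈ ball b δ'
    · rw [norm_smul, Real.norm_of_nonneg (hl01 x).1]
      exact (mul_le_of_le_one_left (norm_nonneg _) (hl01 x).2).trans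
        (hδU (hδδ' hx)).2.le
    · rw [hl0 hx, Pi.zero_apply, zero_smul, norm_zero]
      exact hε.le
  · have hl_near : ∀ x ∈ closedBall b (δ' / 2), g x + l x • (h x - g x) = h x := fun x hx => by
      rw [hl1 hx, Pi.one_apply, one_smul, add_sub_cancel]
    filter_upwards [closedBall_mem_nhds b (half_pos hδ')] with a ha
    rw [hl_near a ha, hl_near b (mem_closedBall_self (half_pos hδ').le)]
    have ha' : a ∈ ball b δ' := (mem_closedBall.1 ha).trans_lt (half_lt_self hδ')
    exact hhlip a (hδU (hδδ' ha')).1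

theorem exists_local_patch_away_from_closed (hcv : ∀ a, Convex ℝ (φ a))
    (hloc : AdmitsLocalStronglyPtwiseLipschitzSelections φ α) (hg : Continuous g)
    (hgφ : ∀ a, g a ∈ φ a) {E : Set M} (hE : IsClosed E) {b : M} (hb : b ∉ E) {R ε η : ℝ}
    (hR : 0 < R) (hε : 0 < ε) (hη : 0 < η) :
    ∃ P : M → X, Continuous P ∧ (∀ a, g a + P a ∈ φ a) ∧ support P ⊆ ball b R ∧
      (∀ x, ‖P x‖ ≤ ε) ∧ (∀ e ∈ E, ∀ x, ‖P x‖ ≤ η * dist x e) ∧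
      ∀ᶠ a in 𝓝 b, ‖g b + P b - (g a + P a)‖ ≤ α * dist b a := by
  obtain ⟨r, hr, hrE⟩ := Metric.isOpen_iff.1 hE.isOpen_compl b hb
  set R' := min R (r / 2)
  have hR' : 0 < R' := lt_min hR (half_pos hr)
  obtain ⟨P, hPc, hPφ, hPsupp, hPε, hPlip⟩ :=
    exists_local_patch hcv hloc hg hgφ b hR' (lt_min hε (mul_pos hη hR'))
  refine ⟨P, hPc, hPφ, hPsupp.trans (ball_subset_ball (min_le_left _ _)),
    fun x => (hPε x).trans (min_le_left _ _), fun e he x => ?_, hPlip⟩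
  by_cases hx : P x = 0
  · rw [hx, norm_zero]
    positivity
  have hxb : dist x b < R' := hPsupp hx
  have hbe : r ≤ dist b e := not_lt.1 fun h => hrE (mem_ball'.2 h) he
  have : R' ≤ dist x e := by
    linarith [min_le_right R (r / 2), dist_triangle b x e, dist_comm x b]
  exact (hPε x).trans ((min_le_right _ _).trans (by gcongr))

theorem exists_refined_selection (hcv : ∀ a, Convex ℝ (φ a))
    (hloc : AdmitsLocalStronglyPtwiseLipschitzSelections φ α) (hg : Continuous g)
    (hgφ : ∀ a, g a ∈ φ a) {c ε η : ℝ} (hc : 0 < c) (hε : 0 < ε) (hη : 0 < η) {S E : Set M}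
    (hS : S.Pairwise (c ≤ dist · ·)) (hE : IsClosed E) (hSE : Disjoint S E) :
    ∃ g' : M → X, Continuous g' ∧ (∀ a, g' a ∈ φ a) ∧ (∀ x, ‖g' x - g x‖ ≤ ε) ∧
      (∀ e ∈ E, ∀ x, ‖g' x - g x‖ ≤ η * dist x e) ∧
      ∀ b ∈ S, ∀ᶠ a in 𝓝 b, ‖g' b - g' a‖ ≤ α * dist b a := by
  -- patches are indexed by all of `M` (zero off `S`) so that the index type is nonempty
  have hpatch : ∀ b, ∃ P : M → X, Continuous P ∧ (∀ a, g a + P a ∈ φ a) ∧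
      (∀ x ∈ support P, b ∈ S ∧ dist x b < c / 4) ∧ (∀ x, ‖P x‖ ≤ ε) ∧
      (∀ e ∈ E, ∀ x, ‖P x‖ ≤ η * dist x e) ∧
      (b ∈ S → ∀ᶠ a in 𝓝 b, ‖g b + P b - (g a + P a)‖ ≤ α * dist b a) := by
    intro b
    by_cases hb : b ∈ S
    · obtain ⟨P, hPc, hPφ, hPsupp, hPε, hPη, hPlip⟩ := exists_local_patch_away_from_closed hcv
        hloc hg hgφ hE (hSE.notMem_of_mem_left hb) (by positivity : 0 < c / 4) hε hη
      exact ⟨P, hPc, hPφ, fun x hx => ⟨hb, hPsupp hx⟩, hPε, hPη, fun _ => hPlip⟩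
    · refine ⟨0, continuous_const, by simpa using hgφ, by simp, by simp [hε.le],
        fun e _ x => ?_, fun h => absurd h hb⟩
      simp only [Pi.zero_apply, norm_zero]
      positivity
  choose P hPc hPφ hPsupp hPε hPη hPlip using hpatch
  have hsupp x : (support fun b => P b x).Subsingleton :=
    (subsingleton_inter_ball_of_pairwise_le_dist hS x).anti fun b hb => by
      obtain ⟨hbS, hxb⟩ := hPsupp b x hb
      exact ⟨hbS, by rw [mem_ball, dist_comm]; linarith⟩
  have hsum x : ∃ b, ∑ᶠ b', P b' x = P b x :=
    have : Nonempty M := ⟨x⟩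
    exists_finsum_eq_of_subsingleton_support (hsupp x)
  have hsum_near : ∀ b ∈ S, ∀ a ∈ ball b (c / 4), ∑ᶠ b', P b' a = P b a := by
    intro b hb a ha
    refine finsum_eq_single (fun b' => P b' a) b fun b' hb' => ?_
    by_contra hb'a
    obtain ⟨hb'S, hab'⟩ := hPsupp b' a hb'a
    refine hb' (subsingleton_inter_ball_of_pairwise_le_dist hS a ⟨hb'S, ?_⟩ ⟨hb, ?_⟩) <;>
      rw [mem_ball, dist_comm] <;> linarith [mem_ball.1 ha]
  refine ⟨fun x => g x + ∑ᶠ b, P b x,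
    hg.add (continuous_finsum hPc (locallyFinite_of_pairwise_le_dist hc hS hPsupp)),
    fun a => ?_, fun x => ?_, fun e he x => ?_, fun b hb => ?_⟩
  · obtain ⟨b, hb⟩ := hsum a
    simpa only [hb] using hPφ b a
  · obtain ⟨b, hb⟩ := hsum x
    simpa only [hb, add_sub_cancel_left] using hPε b x
  · obtain ⟨b, hb⟩ := hsum x
    simpa only [hb, add_sub_cancel_left] using hPη b e he x
  · filter_upwards [hPlip b hb, ball_mem_nhds b (by positivity : 0 < c / 4)] with a hlip ha
    rwa [hsum_near b hb a ha, hsum_near b hb b (mem_ball_self (by positivity))]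

theorem exists_seq_refined_selections (hcv : ∀ a, Convex ℝ (φ a))
    (hloc : AdmitsLocalStronglyPtwiseLipschitzSelections φ α) (hg : Continuous g)
    (hgφ : ∀ a, g a ∈ φ a) {D : ℕ → Set M} {c ε η : ℕ → ℝ} (hc : ∀ n, 0 < c n)
    (hε : ∀ n, 0 < ε n) (hη : ∀ n, 0 < η n) (hD : ∀ n, (D n).Pairwise (c n ≤ dist · ·)) :
    ∃ F : ℕ → M → X, (∀ n, Continuous (F n) ∧ ∀ a, F n a ∈ φ a) ∧
      (∀ n x, ‖F (n + 1) x - F n x‖ ≤ ε n) ∧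
      (∀ n, ∀ e ∈ (Finset.Iio n).sup D, ∀ x, ‖F (n + 1) x - F n x‖ ≤ η n * dist x e) ∧
      ∀ n, ∀ b ∈ disjointed D n, ∀ᶠ a in 𝓝 b, ‖F (n + 1) b - F (n + 1) a‖ ≤ α * dist b a := by
  have hE n : IsClosed ((Finset.Iio n).sup D) := by
    rw [Finset.sup_set_eq_biUnion]
    exact isClosed_biUnion_finset fun k _ => isClosed_of_pairwise_le_dist (hc k) (hD k)
  obtain ⟨F, hF, hstep⟩ := exists_seq_of_forall_exists (P := fun g => Continuous g ∧ ∀ a, g a ∈ φ a)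
    ⟨hg, hgφ⟩ fun n g hg => by
      obtain ⟨g', hg'⟩ := exists_refined_selection hcv hloc hg.1 hg.2 (hc n) (hε n) (hη n)
        ((hD n).mono (disjointed_le D n)) (hE n) disjoint_sdiff_left
      exact ⟨g', ⟨hg'.1, hg'.2.1⟩, hg'.2.2⟩
  exact ⟨F, hF, fun n => (hstep n).1, fun n => (hstep n).2.1, fun n => (hstep n).2.2⟩

end Stage

theorem stmt0_general {M X : Type*} [MetricSpace M] [NormedAddCommGroup X] [NormedSpace ℝ X]
    [CompleteSpace X] (α : ℝ) (φ : M → Set X)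
    (hcl : ∀ a, IsClosed (φ a)) (hcv : ∀ a, Convex ℝ (φ a))
    (hloc : AdmitsLocalStronglyPtwiseLipschitzSelections φ α)
    (hsel : ∃ g : M → X, Continuous g ∧ ∀ a, g a ∈ φ a)
    (β : ℝ) (hβ : α < β) :
    ∃ f : M → X, Continuous f ∧ (∀ a, f a ∈ φ a) ∧
      ∃ B : Set M, Dense B ∧ ∀ b ∈ B, PtwiseLipschitzAt f β b := by
  obtain ⟨g, hg, hgφ⟩ := hsel
  have hhalf n : (0 : ℝ) < (1 / 2) ^ n := by positivity
  choose D hDsep hDnet using fun n =>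
    exists_pairwise_le_dist_forall_exists_dist_lt (M := M) (hhalf n)
  obtain ⟨F, hF, hFstep, hFtail, hFlip⟩ := exists_seq_refined_selections hcv hloc hg hgφ hhalf hhalf
    (fun n => mul_pos (sub_pos.2 hβ) (hhalf (n + 1))) hDsep
  obtain ⟨f, hfc, hf⟩ := exists_continuous_tendsto_of_dist_le_geometric (fun n => (hF n).1)
    (C := 1) (r := 1 / 2) (by norm_num) (by norm_num) fun n x => by
      simpa [dist_eq_norm'] using hFstep n x
  refine ⟨f, hfc, fun a => (hcl a).mem_of_tendsto (hf a) (.of_forall fun n => (hF n).2 a),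
    ⋃ n, disjointed D n, ?_, fun b hb => ?_⟩
  · rw [iUnion_disjointed]
    exact dense_iUnion_of_forall_exists_dist_lt
      (tendsto_pow_atTop_nhds_zero_of_lt_one (by norm_num) (by norm_num)) hDnet
  · obtain ⟨k, hbk⟩ := mem_iUnion.1 hb
    have hb_later n (hn : k + 1 ≤ n) : b ∈ (Finset.Iio n).sup D :=
      Finset.le_sup (f := D) (Finset.mem_Iio.2 hn) (disjointed_le D k hbk)
    simpa using ptwiseLipschitzAt_of_tendsto hf (sub_nonneg.2 hβ.le) (hFlip k b hbk)
      fun n hn x => hFtail n b (hb_later n hn) x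

/-- **Pointwise Lipschitz Selection Theorem.** -/
theorem stmt0 {M X : Type*} [MetricSpace M] [NormedAddCommGroup X] [NormedSpace ℝ X]
    [CompleteSpace X] (α : ℝ) (hα : 0 ≤ α) (φ : M → Set X)
    (hne : ∀ a, (φ a).Nonempty) (hcl : ∀ a, IsClosed (φ a)) (hcv : ∀ a, Convex ℝ (φ a))
    (hloc : AdmitsLocalStronglyPtwiseLipschitzSelections φ α)
    (hsel : ∃ g : M → X, Continuous g ∧ ∀ a, g a ∈ φ a)
    (β : ℝ) (hβ : α < β) :
    ∃ f : M → X, Continuous f ∧ (∀ a, f a ∈ φ a) ∧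
      ∃ B : Set M, Dense B ∧ ∀ b ∈ B, PtwiseLipschitzAt f β b :=
  stmt0_general α φ hcl hcv hloc hsel β hβ
end

section
/- Let (M,d) be a metric space, X a normed space, α ≥ 0, and let φ : M ⇉ X be a non-empty-valued and convex-valued correspondence that admits local strongly pointwise α-Lipschitz selections. Then for every ε > 0 and every continuous selection f₀ : M → X of φ there exist a sequence of continuous functions f_n : M → X (n ≥ 1) and a sequence of subsets B_n ⊆ M (n ≥ 1) such that, setting B₀ := ∅, for every n ≥ 1: (1) B_n is a maximal 2^{-(n-1)}-separation in M (maximal with respect to inclusion among 2^{-(n-1)}-separations) with B_{n-1} ⊆ B_n; (2) f_n is a continuous selection of φ, and f_n is bounded if f₀ is bounded; (3) sup_{a ∈ M} ‖f_n(a) − f_{n-1}(a)‖ ≤ 2^{-n}·ε; (4) f_n is pointwise α-Lipschitz at every point of B_n; (5) for every b ∈ B_n \ B_{n-1} there exists δ > 0 such that ‖f_n(b) − f_n(a)‖ ≤ α·d(b,a) for every a in the open ball B(b,δ); (6) for every k ∈ {1,…,n−1} and every b ∈ B_k, the functions f_n, f_{n-1}, …, f_k all coincide on the open ball B(b, 2^{-n}).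 -/
open Filter Metric Set Topology

/-- `B` is an `r`-separation in `M`. -/
def IsSeparation {M : Type*} [MetricSpace M] (r : ℝ) (B : Set M) : Prop :=
  ∀ a ∈ B, ∀ b ∈ B, a ≠ b → r ≤ dist a b

/-- `B` is a maximal `r`-separation in `M` (w.r.t. inclusion). -/
def IsMaximalSeparation {M : Type*} [MetricSpace M] (r : ℝ) (B : Set M) : Prop :=
  IsSeparation r B ∧ ∀ C : Set M, IsSeparation r C → B ⊆ C → C = B

lemma ptwise_of_strong {M X : Type*} [PseudoMetricSpace M] [NormedAddCommGroup X]
    {f : M → X} {α : ℝ} (hα : 0 ≤ α) {b : M} {δ : ℝ} (hδ : 0 < δ)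
    (h : ∀ a, dist a b < δ → ‖f b - f a‖ ≤ α * dist b a) :
    PtwiseLipschitzAt f α b := by
  apply Filter.limsup_le_of_le (by isBoundedDefault)
  filter_upwards [Ioo_mem_nhdsGT_of_mem ⟨le_refl 0, hδ⟩] with r hr
  obtain ⟨hr0, hrδ⟩ := hr
  have hsup : (⨆ a ∈ Metric.closedBall b r, edist (f b) (f a)) ≤ ENNReal.ofReal (α * r) := by
    refine iSup₂_le fun a ha => ?_
    rw [edist_dist, dist_eq_norm]
    apply ENNReal.ofReal_le_ofReal
    have hd : dist a b < δ := lt_of_le_of_lt (mem_closedBall.mp ha) hrδ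
    calc ‖f b - f a‖ ≤ α * dist b a := h a hd
      _ ≤ α * r := by
          have := mem_closedBall.mp ha
          rw [dist_comm] at this
          exact mul_le_mul_of_nonneg_left this hα
  calc (ENNReal.ofReal r)⁻¹ * ⨆ a ∈ Metric.closedBall b r, edist (f b) (f a)
      ≤ (ENNReal.ofReal r)⁻¹ * ENNReal.ofReal (α * r) := by gcongr
    _ = (ENNReal.ofReal r)⁻¹ * (ENNReal.ofReal α * ENNReal.ofReal r) := by
        rw [ENNReal.ofReal_mul hα, mul_comm (ENNReal.ofReal α)]
    _ = ENNReal.ofReal α := by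
        rw [← mul_assoc, mul_comm ((ENNReal.ofReal r)⁻¹), mul_assoc,
          ENNReal.inv_mul_cancel (by simpa using hr0) ENNReal.ofReal_ne_top, mul_one]

lemma sep_mono {M : Type*} [MetricSpace M] {r r' : ℝ} {B : Set M} (h : IsSeparation r B)
    (hr : r' ≤ r) : IsSeparation r' B :=
  fun a ha b hb hab => hr.trans (h a ha b hb hab)


lemma exists_max_sep {M : Type*} [MetricSpace M] (r : ℝ) (B : Set M)
    (hB : IsSeparation r B) : ∃ C, IsMaximalSeparation r C ∧ B ⊆ C := by
  obtain ⟨m, hBm, hmax⟩ := zorn_subset_nonempty {C : Set M | IsSeparation r C}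
    (fun c hc hchain hne => by
      refine ⟨⋃₀ c, ?_, fun s hs => subset_sUnion_of_mem hs⟩
      intro a ha b hb hab
      obtain ⟨s, hs, has⟩ := ha
      obtain ⟨t, ht, hbt⟩ := hb
      rcases hchain.total hs ht with h | h
      · exact hc ht a (h has) b hbt hab
      · exact hc hs a has b (h hbt) hab) B hB
  exact ⟨m, ⟨hmax.prop, fun C hC hmC => (hmax.eq_of_le hC hmC).symm⟩, hBm⟩

lemma step_lemma {M X : Type*} [MetricSpace M] [NormedAddCommGroup X] [NormedSpace ℝ X]
    (α : ℝ) (hα : 0 ≤ α) (φ : M → Set X) (hcv : ∀ a, Convex ℝ (φ a))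
    (hloc : AdmitsLocalStronglyPtwiseLipschitzSelections φ α)
    (ε : ℝ) (hε : 0 < ε) (n : ℕ)
    (g : M → X) (hgc : Continuous g) (hgs : ∀ a, g a ∈ φ a)
    (B : Set M) (hB : IsSeparation ((1/2 : ℝ)^n) B) :
    ∃ (h : M → X) (C : Set M),
      IsMaximalSeparation ((1/2 : ℝ)^n) C ∧ B ⊆ C ∧
      Continuous h ∧ (∀ a, h a ∈ φ a) ∧
      (∀ a, ‖h a - g a‖ ≤ (1/2 : ℝ)^(n+1) * ε) ∧
      (∀ b ∈ C \ B, ∃ δ : ℝ, 0 < δ ∧ ∀ a, dist a b < δ → ‖h b - h a‖ ≤ α * dist b a) ∧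
      (∀ b ∈ B, ∀ a, dist a b < (1/2 : ℝ)^(n+1) → h a = g a) := by
  obtain ⟨C, hCmax, hBC⟩ := exists_max_sep _ B hB
  -- power facts
  have hp0 : (0:ℝ) < (1/2:ℝ)^n := by positivity
  have hp1 : ((1:ℝ)/2)^(n+1) = (1/2:ℝ)^n / 2 := by rw [pow_succ]; ring
  have hp2 : ((1:ℝ)/2)^(n+2) = (1/2:ℝ)^n / 4 := by rw [pow_succ, pow_succ]; ring
  -- local selections
  choose U hUopen hUmem G hGc hGsel hGy hGlip using fun b => hloc b (g b) (hgs b)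
  -- radii
  have hrad : ∀ b : M, ∃ ρ : ℝ, 0 < ρ ∧ ρ ≤ (1/2:ℝ)^(n+2) ∧ ball b ρ ⊆ U b ∧
      ∀ a ∈ ball b ρ, ‖G b a - g a‖ ≤ (1/2:ℝ)^(n+1) * ε := by
    intro b
    have hU : U b ∈ 𝓝 b := (hUopen b).mem_nhds (hUmem b)
    have hVopen : IsOpen {a | ‖G b a - g a‖ < (1/2:ℝ)^(n+1)*ε} :=
      isOpen_lt (Continuous.norm ((hGc b).sub hgc)) continuous_const
    have hVmem : b ∈ {a | ‖G b a - g a‖ < (1/2:ℝ)^(n+1)*ε} := by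
      simp only [mem_setOf_eq, hGy b, sub_self, norm_zero]
      positivity
    obtain ⟨ρ₁, hρ₁, h1⟩ := Metric.mem_nhds_iff.mp (Filter.inter_mem hU (hVopen.mem_nhds hVmem))
    refine ⟨min ρ₁ ((1/2:ℝ)^(n+2)), by positivity, min_le_right _ _, ?_, ?_⟩
    · exact fun a ha => (h1 (ball_subset_ball (min_le_left _ _) ha)).1
    · exact fun a ha => le_of_lt (h1 (ball_subset_ball (min_le_left _ _) ha)).2
  choose ρ hρpos hρle hρU hρε using hrad
  set N : Set M := C \ B with hN
  set t : M → M → ℝ := fun b a => max 0 (min 1 (2 - 2 * dist a b / ρ b)) with ht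
  set F : M → M → X := fun b a => (1 - t b a) • g a + t b a • G b a with hF
  have ht0le : ∀ b a, 0 ≤ t b a := fun b a => le_max_left _ _
  have htle1 : ∀ b a, t b a ≤ 1 := fun b a =>
    max_le (by norm_num) (min_le_left _ _)
  have ht1 : ∀ b a, dist a b ≤ ρ b / 2 → t b a = 1 := by
    intro b a hd
    have h2 : 2 * dist a b / ρ b ≤ 1 := by
      rw [div_le_one (hρpos b)]
      linarith [hρpos b]
    have : (1:ℝ) ≤ 2 - 2 * dist a b / ρ b := by linarith
    simp only [ht]
    rw [min_eq_left, max_eq_right] <;> linarith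
  have ht0 : ∀ b a, ρ b ≤ dist a b → t b a = 0 := by
    intro b a hd
    have : 2 - 2 * dist a b / ρ b ≤ 0 := by
      have := hρpos b
      rw [sub_nonpos, le_div_iff₀ this]
      nlinarith
    simp only [ht]
    rw [max_eq_left]
    exact le_trans (min_le_right _ _) this
  have htcont : ∀ b, Continuous (t b) :=
    fun b => continuous_const.max ((continuous_const.min
      (continuous_const.sub ((continuous_const.mul (continuous_id.dist continuous_const)).div_const _))))
  have hFcont : ∀ b, Continuous (F b) := by
    intro b
    exact ((continuous_const.sub (htcont b)).smul hgc).add ((htcont b).smul (hGc b))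
  have hFsub : ∀ b a, F b a - g a = t b a • (G b a - g a) := by
    intro b a
    simp only [hF, sub_smul, one_smul, smul_sub]
    abel
  have hFsel : ∀ b a, F b a ∈ φ a := by
    intro b a
    exact hcv a (hgs a) (hGsel b a) (by linarith [htle1 b a]) (ht0le b a) (by ring)
  have hFnorm : ∀ b a, dist a b < ρ b → ‖F b a - g a‖ ≤ (1/2:ℝ)^(n+1) * ε := by
    intro b a hd
    rw [hFsub, norm_smul, Real.norm_eq_abs, abs_of_nonneg (ht0le b a)]
    calc t b a * ‖G b a - g a‖ ≤ 1 * ((1/2:ℝ)^(n+1) * ε) := by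
          apply mul_le_mul (htle1 b a) (hρε b a (mem_ball.mpr hd)) (norm_nonneg _) one_pos.le
      _ = (1/2:ℝ)^(n+1) * ε := one_mul _
  have hFeqg : ∀ b a, ρ b ≤ dist a b → F b a = g a := by
    intro b a hd
    simp [hF, ht0 b a hd]
  -- the function
  classical
  set h : M → X := fun a => if hc : ∃ b, b ∈ N ∧ dist a b < ρ b then F hc.choose a else g a
    with hh
  have uniq : ∀ b₁ ∈ N, ∀ b₂ ∈ N, dist b₁ b₂ < (1/2:ℝ)^n → b₁ = b₂ := by
    intro b₁ hb₁ b₂ hb₂ hd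
    by_contra hne
    exact absurd (hCmax.1 b₁ hb₁.1 b₂ hb₂.1 hne) (not_le.mpr hd)
  have hchoose : ∀ a (hc : ∃ b, b ∈ N ∧ dist a b < ρ b), h a = F hc.choose a := by
    intro a hc
    simp only [hh, dif_pos hc]
  have hin : ∀ b, b ∈ N → ∀ a, dist a b < ρ b → h a = F b a := by
    intro b hb a hd
    have hc : ∃ b', b' ∈ N ∧ dist a b' < ρ b' := ⟨b, hb, hd⟩
    rw [hchoose a hc]
    obtain ⟨hb', hd'⟩ := hc.choose_spec
    have : hc.choose = b := by
      apply uniq _ hb' _ hb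
      calc dist hc.choose b ≤ dist a hc.choose + dist a b := dist_triangle_left _ _ _
        _ < ρ hc.choose + ρ b := by linarith
        _ ≤ (1/2:ℝ)^(n+2) + (1/2:ℝ)^(n+2) := by linarith [hρle hc.choose, hρle b]
        _ < (1/2:ℝ)^n := by rw [hp2]; linarith
    rw [this]
  have hout : ∀ a, (∀ b ∈ N, ρ b ≤ dist a b) → h a = g a := by
    intro a ha
    have hc : ¬ ∃ b, b ∈ N ∧ dist a b < ρ b := by
      rintro ⟨b, hb, hd⟩
      exact absurd (ha b hb) (not_le.mpr hd)
    simp only [hh, dif_neg hc]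
  -- continuity
  have hcont : Continuous h := by
    rw [continuous_iff_continuousAt]
    intro a₀
    by_cases hc : ∃ b, b ∈ N ∧ ∃ x, dist x b < ρ b ∧ dist x a₀ < (1/2:ℝ)^(n+2)
    · obtain ⟨b, hbN, x, hx1, hx2⟩ := hc
      have heq : ∀ a, dist a a₀ < (1/2:ℝ)^(n+2) → h a = F b a := by
        intro a ha
        by_cases hd : ∃ b', b' ∈ N ∧ dist a b' < ρ b'
        · rw [hchoose a hd]
          obtain ⟨hb', hd'⟩ := hd.choose_spec
          have : hd.choose = b := by
            apply uniq _ hb' _ hbN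
            calc dist hd.choose b ≤ dist a hd.choose + dist a b := dist_triangle_left _ _ _
              _ ≤ dist a hd.choose + (dist a a₀ + (dist x a₀ + dist x b)) := by
                  have : dist a b ≤ dist a a₀ + dist a₀ b := dist_triangle _ _ _
                  have h2 : dist a₀ b ≤ dist x a₀ + dist x b := dist_triangle_left _ _ _
                  linarith
              _ < ρ hd.choose + ((1/2:ℝ)^(n+2) + ((1/2:ℝ)^(n+2) + ρ b)) := by linarith
              _ ≤ (1/2:ℝ)^(n+2) + ((1/2:ℝ)^(n+2) + ((1/2:ℝ)^(n+2) + (1/2:ℝ)^(n+2))) := by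
                  linarith [hρle hd.choose, hρle b]
              _ ≤ (1/2:ℝ)^n := by rw [hp2]; linarith
            -- need strict <; fix below
          rw [this]
        · push_neg at hd
          rw [hout a (fun b' hb' => not_lt.mp (fun hlt => (not_lt.mpr (hd b' hb')) hlt))]
          exact (hFeqg b a (hd b hbN)).symm
      have : h =ᶠ[nhds a₀] F b := by
        filter_upwards [Metric.ball_mem_nhds a₀ (by positivity : (0:ℝ) < (1/2:ℝ)^(n+2))] with a ha
        exact heq a (mem_ball.mp ha)
      exact (hFcont b).continuousAt.congr this.symm
    · push_neg at hc
      have heq : ∀ a, dist a a₀ < (1/2:ℝ)^(n+2) → h a = g a := by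
        intro a ha
        apply hout
        intro b hb
        by_contra hlt
        exact absurd ha (not_lt.mpr (hc b hb a (not_le.mp hlt)))
      have : h =ᶠ[nhds a₀] g := by
        filter_upwards [Metric.ball_mem_nhds a₀ (by positivity : (0:ℝ) < (1/2:ℝ)^(n+2))] with a ha
        exact heq a (mem_ball.mp ha)
      exact hgc.continuousAt.congr this.symm
  -- selection
  have hsel : ∀ a, h a ∈ φ a := by
    intro a
    by_cases hd : ∃ b, b ∈ N ∧ dist a b < ρ b
    · rw [hchoose a hd]; exact hFsel _ a
    · simp only [hh, dif_neg hd]; exact hgs a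
  -- norm bound
  have hnorm : ∀ a, ‖h a - g a‖ ≤ (1/2:ℝ)^(n+1) * ε := by
    intro a
    by_cases hd : ∃ b, b ∈ N ∧ dist a b < ρ b
    · rw [hchoose a hd]
      exact hFnorm _ a hd.choose_spec.2
    · simp only [hh, dif_neg hd, sub_self, norm_zero]
      positivity
  -- new points
  have hnew : ∀ b ∈ C \ B, ∃ δ : ℝ, 0 < δ ∧
      ∀ a, dist a b < δ → ‖h b - h a‖ ≤ α * dist b a := by
    intro b hb
    refine ⟨ρ b / 2, by linarith [hρpos b], ?_⟩
    intro a ha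
    have hEQ : ∀ x : M, dist x b < ρ b / 2 → h x = G b x := by
      intro x hx
      rw [hin b hb x (by linarith [hρpos b])]
      simp [hF, ht1 b x hx.le]
    have hb2 : h b = G b b := hEQ b (by simp [dist_self]; linarith [hρpos b])
    rw [hb2, hEQ a ha]
    rw [hGy b] at *
    have haU : a ∈ U b := hρU b (mem_ball.mpr (by linarith [hρpos b]))
    calc ‖g b - G b a‖ = ‖G b b - G b a‖ := by rw [hGy b]
      _ ≤ α * dist b a := hGlip b a haU
  -- old points
  have hold : ∀ b ∈ B, ∀ a, dist a b < (1/2:ℝ)^(n+1) → h a = g a := by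
    intro b hb a ha
    apply hout
    intro b' hb'
    by_contra hlt
    push_neg at hlt
    have hne : b' ≠ b := fun he => hb'.2 (he ▸ hb)
    have := hCmax.1 b' hb'.1 b (hBC hb) hne
    have hd : dist b' b ≤ dist a b' + dist a b := dist_triangle_left _ _ _
    have := hρle b'
    rw [hp1] at ha
    rw [hp2] at this
    linarith
  exact ⟨h, C, hCmax, hBC, hcont, hsel, hnorm, hnew, hold⟩

/-- The key inductive construction of successively more pointwise Lipschitz selections. -/
theorem stmt2 {M X : Type*} [MetricSpace M] [NormedAddCommGroup X] [NormedSpace ℝ X]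
    (α : ℝ) (hα : 0 ≤ α) (φ : M → Set X)
    (hne : ∀ a, (φ a).Nonempty) (hcv : ∀ a, Convex ℝ (φ a))
    (hloc : AdmitsLocalStronglyPtwiseLipschitzSelections φ α)
    (ε : ℝ) (hε : 0 < ε)
    (f₀ : M → X) (hf₀cont : Continuous f₀) (hf₀sel : ∀ a, f₀ a ∈ φ a) :
    ∃ (f : ℕ → M → X) (B : ℕ → Set M), f 0 = f₀ ∧ B 0 = ∅ ∧
      ∀ n : ℕ, 1 ≤ n →
        -- (1)
        (IsMaximalSeparation ((1/2 : ℝ) ^ (n - 1)) (B n) ∧ B (n - 1) ⊆ B n) ∧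
        -- (2)
        (Continuous (f n) ∧ (∀ a, f n a ∈ φ a) ∧
          (Bornology.IsBounded (Set.range f₀) → Bornology.IsBounded (Set.range (f n)))) ∧
        -- (3)
        (∀ a : M, ‖f n a - f (n - 1) a‖ ≤ (1/2 : ℝ) ^ n * ε) ∧
        -- (4)
        (∀ b ∈ B n, PtwiseLipschitzAt (f n) α b) ∧
        -- (5)
        (∀ b ∈ B n \ B (n - 1), ∃ δ : ℝ, 0 < δ ∧
          ∀ a ∈ Metric.ball b δ, ‖f n b - f n a‖ ≤ α * dist b a) ∧
        -- (6)
        (∀ k : ℕ, 1 ≤ k → k ≤ n - 1 → ∀ b ∈ B k, ∀ m : ℕ, k ≤ m → m ≤ n →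
          ∀ a ∈ Metric.ball b ((1/2 : ℝ) ^ n), f m a = f n a) := by
  classical
  set I : ℕ → (M → X) × Set M → Prop := fun n p =>
    Continuous p.1 ∧ (∀ a, p.1 a ∈ φ a) ∧ IsSeparation ((1/2:ℝ)^n) p.2 with hIdef
  have key : ∀ n (p : (M → X) × Set M), I n p → ∃ q : (M → X) × Set M,
      I (n+1) q ∧
      ((IsMaximalSeparation ((1/2:ℝ)^n) q.2 ∧ p.2 ⊆ q.2) ∧
      (∀ a, ‖q.1 a - p.1 a‖ ≤ (1/2:ℝ)^(n+1) * ε) ∧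
      (∀ b ∈ q.2 \ p.2, ∃ δ : ℝ, 0 < δ ∧ ∀ a, dist a b < δ → ‖q.1 b - q.1 a‖ ≤ α * dist b a) ∧
      (∀ b ∈ p.2, ∀ a, dist a b < (1/2:ℝ)^(n+1) → q.1 a = p.1 a)) := by
    rintro n ⟨g, B⟩ ⟨hgc, hgs, hBsep⟩
    obtain ⟨h, C, hCmax, hBC, hc, hs, hn, hnew, hold⟩ :=
      step_lemma α hα φ hcv hloc ε hε n g hgc hgs B hBsep
    have hple : (1/2:ℝ)^(n+1) ≤ (1/2:ℝ)^n := by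
      have : (0:ℝ) < (1/2:ℝ)^n := by positivity
      rw [pow_succ]; linarith
    exact ⟨(h, C), ⟨hc, hs, sep_mono hCmax.1 hple⟩, ⟨hCmax, hBC⟩, hn, hnew, hold⟩
  choose! Q hQ using key
  set S : ℕ → (M → X) × Set M := fun n => Nat.rec (f₀, (∅ : Set M)) (fun n p => Q n p) n
    with hSdef
  have hSsucc : ∀ n, S (n+1) = Q n (S n) := fun n => rfl
  have hInv : ∀ n, I n (S n) := by
    intro n
    induction n with
    | zero => exact ⟨hf₀cont, hf₀sel, fun a ha => absurd ha (Set.notMem_empty a)⟩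
    | succ n ih => rw [hSsucc]; exact (hQ n (S n) ih).1
  have hR := fun n => (hQ n (S n) (hInv n)).2
  set f : ℕ → M → X := fun n => (S n).1 with hfdef
  set B : ℕ → Set M := fun n => (S n).2 with hBdef
  -- restate hR
  have hRmax : ∀ n, IsMaximalSeparation ((1/2:ℝ)^n) (B (n+1)) ∧ B n ⊆ B (n+1) :=
    fun n => (hR n).1
  have hRnorm : ∀ n a, ‖f (n+1) a - f n a‖ ≤ (1/2:ℝ)^(n+1) * ε := fun n => (hR n).2.1
  have hRnew : ∀ n, ∀ b ∈ B (n+1) \ B n, ∃ δ : ℝ, 0 < δ ∧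
      ∀ a, dist a b < δ → ‖f (n+1) b - f (n+1) a‖ ≤ α * dist b a := fun n => (hR n).2.2.1
  have hRold : ∀ n, ∀ b ∈ B n, ∀ a, dist a b < (1/2:ℝ)^(n+1) → f (n+1) a = f n a :=
    fun n => (hR n).2.2.2
  have hBmono : ∀ j k, j ≤ k → B j ⊆ B k := by
    intro j k hjk
    induction k with
    | zero => rw [Nat.le_zero] at hjk; subst hjk; exact subset_rfl
    | succ k ih =>
      rcases Nat.lt_or_ge j (k+1) with hl | hg
      · exact (ih (Nat.lt_succ_iff.mp hl)).trans (hRmax k).2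
      · have : j = k + 1 := le_antisymm hjk hg
        subst this; exact subset_rfl
  have hbd : ∀ n, Bornology.IsBounded (Set.range f₀) → Bornology.IsBounded (Set.range (f n)) := by
    intro n hb
    induction n with
    | zero => exact hb
    | succ n ih =>
      obtain ⟨c, hc⟩ := isBounded_iff_forall_norm_le.mp ih
      rw [isBounded_iff_forall_norm_le]
      refine ⟨c + (1/2:ℝ)^(n+1) * ε, ?_⟩
      rintro y ⟨a, rfl⟩
      have h1 : ‖f n a‖ ≤ c := hc _ ⟨a, rfl⟩
      have h2 := hRnorm n a
      have : f (n+1) a = f n a + (f (n+1) a - f n a) := by abel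
      rw [this]
      calc ‖f n a + (f (n+1) a - f n a)‖ ≤ ‖f n a‖ + ‖f (n+1) a - f n a‖ := norm_add_le _ _
        _ ≤ c + (1/2:ℝ)^(n+1) * ε := add_le_add h1 h2
  have hstrong : ∀ n, ∀ b ∈ B n, ∃ δ : ℝ, 0 < δ ∧
      ∀ a, dist a b < δ → ‖f n b - f n a‖ ≤ α * dist b a := by
    intro n
    induction n with
    | zero => intro b hb; exact absurd hb (Set.notMem_empty b)
    | succ n ih =>
      intro b hb
      by_cases hbn : b ∈ B n
      · obtain ⟨δ, hδ, hδlip⟩ := ih b hbn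
        have hp : (0:ℝ) < (1/2:ℝ)^(n+1) := by positivity
        refine ⟨min δ ((1/2:ℝ)^(n+1)), lt_min hδ hp, ?_⟩
        intro a ha
        have hab : f (n+1) a = f n a :=
          hRold n b hbn a (lt_of_lt_of_le ha (min_le_right _ _))
        have hbb : f (n+1) b = f n b :=
          hRold n b hbn b (by rw [dist_self]; exact hp)
        rw [hab, hbb]
        exact hδlip a (lt_of_lt_of_le ha (min_le_left _ _))
      · exact hRnew n b ⟨hb, hbn⟩
  have hchain : ∀ k b, b ∈ B k → ∀ (a : M) (n : ℕ), dist a b < (1/2:ℝ)^n →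
      ∀ m, k ≤ m → m ≤ n → f m a = f n a := by
    intro k b hb a n hd m hkm hmn
    have key2 : ∀ j, k ≤ j → j ≤ n → f j a = f k a := by
      intro j hkj
      induction j, hkj using Nat.le_induction with
      | base => intro _; rfl
      | succ j hkj ih =>
        intro hjn
        have hjn' : j ≤ n := by omega
        have hpow : (1/2:ℝ)^n ≤ (1/2:ℝ)^(j+1) :=
          pow_le_pow_of_le_one (by norm_num) (by norm_num) hjn
        have := hRold j b (hBmono k j hkj hb) a (lt_of_lt_of_le hd hpow)
        rw [this, ih hjn']
    rw [key2 m hkm hmn, key2 n (hkm.trans hmn) le_rfl]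
  refine ⟨f, B, rfl, rfl, ?_⟩
  intro n hn
  obtain ⟨m, rfl⟩ : ∃ m, n = m + 1 := ⟨n - 1, (Nat.succ_pred_eq_of_pos hn).symm⟩
  have hm1 : m + 1 - 1 = m := rfl
  rw [hm1]
  refine ⟨hRmax m, ⟨(hInv (m+1)).1, (hInv (m+1)).2.1, hbd (m+1)⟩, hRnorm m, ?_, ?_, ?_⟩
  · intro b hb
    obtain ⟨δ, hδ, hlip⟩ := hstrong (m+1) b hb
    exact ptwise_of_strong hα hδ hlip
  · intro b hb
    obtain ⟨δ, hδ, hlip⟩ := hstrong (m+1) b hb.1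
    exact ⟨δ, hδ, fun a ha => hlip a (mem_ball.mp ha)⟩
  · intro k hk1 hkm b hb m' hkm' hm'n a ha
    exact hchain k b hb a (m+1) (mem_ball.mp ha) m' hkm' hm'n
end

section
/- Let Y and X be normed spaces, let y be a point of the unit sphere S_Y of Y, let β > 0, and let ρ̲ : S_Y → X be a bounded continuous function that is pointwise β-Lipschitz at y (with S_Y carrying the metric induced from the norm of Y). Define ρ : Y → X by ρ(0) = 0 and ρ(z) = ‖z‖ · ρ̲(z/‖z‖) for z ≠ 0. Then ρ is continuous on Y and ρ is pointwise (2β + ‖ρ̲‖_∞)-Lipschitz at every point of the set { λ·y : λ > 0 } ⊆ Y, where ‖ρ̲‖_∞ = sup_{x ∈ S_Y} ‖ρ̲(x)‖. -/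
open Filter Metric Set

/-!
Write `ρ z = ‖z‖ • f (z / ‖z‖)` and `M = sup ‖f‖`. Continuity at `0` comes from
`‖ρ z‖ ≤ M ‖z‖`. Near `l • y`, a point `a` with `‖a - l • y‖ ≤ r < l` projects to `a / ‖a‖`
within `2r / l` of `y`, and `‖ρ (l • y) - ρ a‖ ≤ l ‖f y - f (a / ‖a‖)‖ + M r`. Dividing by `r`,
the Lipschitz ratio of `ρ` at scale `r` is at most twice that of `f` at scale `2r / l`, plus `M`.
-/

open scoped ENNReal Topology

section PtwiseLipschitzAt

variable {M N X Z : Type*} [PseudoMetricSpace M] [PseudoMetricSpace N]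
  [PseudoMetricSpace X] [PseudoMetricSpace Z]

noncomputable def lipRatio (f : M → X) (b : M) (r : ℝ) : ℝ≥0∞ :=
  (ENNReal.ofReal r)⁻¹ * ⨆ a ∈ closedBall b r, edist (f b) (f a)

lemma ptwiseLipschitzAt_iff {f : M → X} {α : ℝ} {b : M} :
    PtwiseLipschitzAt f α b ↔ limsup (lipRatio f b) (𝓝[>] 0) ≤ ENNReal.ofReal α := Iff.rfl

lemma tendsto_const_mul_nhdsGT_zero {k : ℝ} (hk : 0 < k) :
    Tendsto (k * ·) (𝓝[>] (0 : ℝ)) (𝓝[>] 0) :=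
  tendsto_nhdsWithin_iff.2
    ⟨((continuous_const_mul k).tendsto' 0 0 (mul_zero k)).mono_left nhdsWithin_le_nhds,
      eventually_nhdsWithin_of_forall fun _ hr => mul_pos hk hr⟩

lemma lipRatio_le_of_forall_exists {f : N → X} {g : M → Z} {b : M} {y : N} {c k L r : ℝ}
    (hc : 0 ≤ c) (hk : 0 < k) (hL : 0 ≤ L) (hr : 0 < r)
    (h : ∀ a ∈ closedBall b r, ∃ w ∈ closedBall y (k * r),
      dist (g b) (g a) ≤ c * dist (f y) (f w) + L * r) :
    lipRatio g b r ≤ ENNReal.ofReal (c * k) * lipRatio f y (k * r) + ENNReal.ofReal L := by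
  have hsup : ⨆ a ∈ closedBall b r, edist (g b) (g a) ≤
      ENNReal.ofReal c * (⨆ w ∈ closedBall y (k * r), edist (f y) (f w)) +
        ENNReal.ofReal (L * r) := by
    refine iSup₂_le fun a ha => ?_
    obtain ⟨w, hw, hdist⟩ := h a ha
    calc edist (g b) (g a) ≤ ENNReal.ofReal (c * dist (f y) (f w) + L * r) := by
          rw [edist_dist]; exact ENNReal.ofReal_le_ofReal hdist
      _ = ENNReal.ofReal c * edist (f y) (f w) + ENNReal.ofReal (L * r) := by
          rw [ENNReal.ofReal_add (by positivity) (by positivity), ENNReal.ofReal_mul hc, edist_dist]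
      _ ≤ _ := by gcongr; exact le_biSup (fun w => edist (f y) (f w)) hw
  have hscale : (ENNReal.ofReal r)⁻¹ * ENNReal.ofReal c =
      ENNReal.ofReal (c * k) * (ENNReal.ofReal (k * r))⁻¹ := by
    rw [← ENNReal.ofReal_inv_of_pos hr, ← ENNReal.ofReal_inv_of_pos (mul_pos hk hr),
      ← ENNReal.ofReal_mul (by positivity), ← ENNReal.ofReal_mul (by positivity)]
    congr 1
    field_simp
  have hr' : ENNReal.ofReal r ≠ 0 := (ENNReal.ofReal_pos.2 hr).ne'
  calc lipRatio g b r
      ≤ (ENNReal.ofReal r)⁻¹ *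
          (ENNReal.ofReal c * (⨆ w ∈ closedBall y (k * r), edist (f y) (f w)) +
            ENNReal.ofReal r * ENNReal.ofReal L) := by
        rw [← ENNReal.ofReal_mul hr.le, mul_comm r]; exact mul_le_mul_right hsup _
    _ = _ := by
        rw [mul_add, ENNReal.inv_mul_cancel_left hr' ENNReal.ofReal_ne_top, ← mul_assoc, hscale,
          mul_assoc, lipRatio]

lemma PtwiseLipschitzAt.of_eventually_forall_exists {f : N → X} {g : M → Z} {b : M} {y : N}
    {α c k L : ℝ} (hf : PtwiseLipschitzAt f α y) (hα : 0 ≤ α) (hc : 0 ≤ c) (hk : 0 < k)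
    (hL : 0 ≤ L)
    (h : ∀ᶠ r in 𝓝[>] 0, ∀ a ∈ closedBall b r, ∃ w ∈ closedBall y (k * r),
      dist (g b) (g a) ≤ c * dist (f y) (f w) + L * r) :
    PtwiseLipschitzAt g (c * k * α + L) b := by
  set φ : ℝ≥0∞ → ℝ≥0∞ := fun x => ENNReal.ofReal (c * k) * x + ENNReal.ofReal L
  have hφ_mono : Monotone φ := fun u v huv => by dsimp only [φ]; gcongr
  have hφ_cont : Continuous φ :=
    (ENNReal.continuous_const_mul ENNReal.ofReal_ne_top).add continuous_const
  have hfk : limsup (fun r => lipRatio f y (k * r)) (𝓝[>] 0) ≤ ENNReal.ofReal α :=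
    (limsup_comp _ _ _).trans_le
      ((limsup_le_limsup_of_le (tendsto_const_mul_nhdsGT_zero hk)).trans hf)
  rw [ptwiseLipschitzAt_iff]
  calc limsup (lipRatio g b) (𝓝[>] 0)
      ≤ limsup (fun r => φ (lipRatio f y (k * r))) (𝓝[>] 0) := by
        refine limsup_le_limsup ?_
        filter_upwards [h, self_mem_nhdsWithin] with r hr hr0
        exact lipRatio_le_of_forall_exists hc hk hL hr0 hr
    _ = φ (limsup (fun r => lipRatio f y (k * r)) (𝓝[>] 0)) :=
        (hφ_mono.map_limsup_of_continuousAt _ hφ_cont.continuousAt).symm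
    _ ≤ φ (ENNReal.ofReal α) := hφ_mono hfk
    _ = ENNReal.ofReal (c * k * α + L) := by
        rw [ENNReal.ofReal_add (by positivity) hL, ENNReal.ofReal_mul (by positivity)]

end PtwiseLipschitzAt

lemma abs_inv_sub_inv_mul_le {x y : ℝ} (hx : 0 < x) (hy : 0 ≤ y) :
    |x⁻¹ - y⁻¹| * y ≤ |y - x| / x := by
  rcases hy.eq_or_lt with rfl | hy
  · simp only [mul_zero]; positivity
  · rw [inv_sub_inv hx.ne' hy.ne', abs_div, abs_of_pos (mul_pos hx hy), div_mul_eq_mul_div,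
      mul_div_mul_right _ _ hy.ne']

section NormSmul

variable {E X : Type*} [SeminormedAddCommGroup E] [SeminormedAddCommGroup X] [NormedSpace ℝ X]

lemma norm_smul_sub_smul_le (s t : ℝ) (u v : X) :
    ‖s • u - t • v‖ ≤ |s| * ‖u - v‖ + |s - t| * ‖v‖ := by
  have hsplit : s • u - t • v = s • (u - v) + (s - t) • v := by
    rw [smul_sub, sub_smul]; abel
  rw [hsplit, ← Real.norm_eq_abs, ← Real.norm_eq_abs, ← norm_smul, ← norm_smul]
  exact norm_add_le _ _

lemma dist_norm_smul_norm_smul_le (z a : E) (u v : X) :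
    dist (‖z‖ • u) (‖a‖ • v) ≤ ‖z‖ * dist u v + dist z a * ‖v‖ := by
  rw [dist_eq_norm, dist_eq_norm, dist_eq_norm]
  calc ‖‖z‖ • u - ‖a‖ • v‖ ≤ |‖z‖| * ‖u - v‖ + |‖z‖ - ‖a‖| * ‖v‖ :=
        norm_smul_sub_smul_le _ _ _ _
    _ ≤ ‖z‖ * ‖u - v‖ + ‖z - a‖ * ‖v‖ := by
        rw [abs_norm]; gcongr; exact abs_norm_sub_norm_le z a

end NormSmul

section SphereProjection

variable {Y : Type*} [NormedAddCommGroup Y] [NormedSpace ℝ Y]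

lemma norm_inv_smul_sub_inv_smul_le {z : Y} (hz : z ≠ 0) (a : Y) :
    ‖‖z‖⁻¹ • z - ‖a‖⁻¹ • a‖ ≤ 2 * ‖z - a‖ / ‖z‖ := by
  have hz' : 0 < ‖z‖ := norm_pos_iff.2 hz
  calc ‖‖z‖⁻¹ • z - ‖a‖⁻¹ • a‖
      ≤ |‖z‖⁻¹| * ‖z - a‖ + |‖z‖⁻¹ - ‖a‖⁻¹| * ‖a‖ := norm_smul_sub_smul_le _ _ _ _
    _ ≤ ‖z - a‖ / ‖z‖ + |‖a‖ - ‖z‖| / ‖z‖ := by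
        rw [abs_of_pos (inv_pos.2 hz'), inv_mul_eq_div]
        gcongr
        exact abs_inv_sub_inv_mul_le hz' (norm_nonneg a)
    _ ≤ 2 * ‖z - a‖ / ‖z‖ := by
        rw [two_mul, add_div, abs_sub_comm]
        gcongr
        exact abs_norm_sub_norm_le z a

-- The value at `0` is an arbitrary `y₀`; it never matters, as it always comes scaled by `‖0‖`.
open scoped Classical in
noncomputable def sphereProj (y₀ : sphere (0 : Y) 1) (z : Y) : sphere (0 : Y) 1 :=
  if hz : z = 0 then y₀ else ⟨‖z‖⁻¹ • z, mem_sphere_zero_iff_norm.2 (norm_smul_inv_norm hz)⟩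

variable (y₀ : sphere (0 : Y) 1)

lemma coe_sphereProj {z : Y} (hz : z ≠ 0) : (sphereProj y₀ z : Y) = ‖z‖⁻¹ • z := by
  simp [sphereProj, hz]

lemma sphereProj_smul_of_pos (y : sphere (0 : Y) 1) {l : ℝ} (hl : 0 < l) :
    sphereProj y₀ (l • (y : Y)) = y := by
  have hly : l • (y : Y) ≠ 0 := smul_ne_zero hl.ne' (ne_zero_of_mem_unit_sphere y)
  ext
  rw [coe_sphereProj y₀ hly, norm_smul, norm_eq_of_mem_sphere y, mul_one,
    Real.norm_of_nonneg hl.le, smul_smul, inv_mul_cancel₀ hl.ne', one_smul]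

lemma dist_sphereProj_le {z a : Y} (hz : z ≠ 0) (ha : a ≠ 0) :
    dist (sphereProj y₀ z) (sphereProj y₀ a) ≤ 2 * dist z a / ‖z‖ := by
  rw [Subtype.dist_eq, dist_eq_norm, dist_eq_norm, coe_sphereProj y₀ hz, coe_sphereProj y₀ ha]
  exact norm_inv_smul_sub_inv_smul_le hz a

lemma continuousAt_sphereProj {z : Y} (hz : z ≠ 0) : ContinuousAt (sphereProj y₀) z := by
  refine Topology.IsInducing.subtypeVal.continuousAt_iff.2 ?_
  refine (((continuous_norm.continuousAt).inv₀ (norm_ne_zero_iff.2 hz)).smul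
    continuousAt_id).congr ?_
  filter_upwards [isOpen_compl_singleton.mem_nhds hz] with a ha
  exact (coe_sphereProj y₀ ha).symm

end SphereProjection

section Homogenization

variable {Y X : Type*} [NormedAddCommGroup Y] [NormedSpace ℝ Y]
  [NormedAddCommGroup X] [NormedSpace ℝ X] (y₀ : sphere (0 : Y) 1) {f : sphere (0 : Y) 1 → X}

lemma continuous_norm_smul_comp_sphereProj (hfc : Continuous f)
    (hfb : BddAbove (range fun x => ‖f x‖)) :
    Continuous fun z : Y => ‖z‖ • f (sphereProj y₀ z) := by
  refine continuous_iff_continuousAt.2 fun z => ?_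
  rcases eq_or_ne z 0 with rfl | hz
  · obtain ⟨M, hM⟩ := hfb
    have hbound (a : Y) : ‖‖a‖ • f (sphereProj y₀ a)‖ ≤ ‖a‖ * M := by
      rw [norm_smul, norm_norm]
      exact mul_le_mul_of_nonneg_left (hM (mem_range_self _)) (norm_nonneg a)
    have hnorm : Tendsto (fun a : Y => ‖a‖ * M) (𝓝 0) (𝓝 0) := by
      simpa using (continuous_norm.tendsto (0 : Y)).mul_const M
    simpa [ContinuousAt] using squeeze_zero_norm hbound hnorm
  · exact continuous_norm.continuousAt.smul
      (hfc.continuousAt.comp (continuousAt_sphereProj y₀ hz))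

lemma ptwiseLipschitzAt_norm_smul_comp_sphereProj {y : sphere (0 : Y) 1} {β : ℝ} (hβ : 0 ≤ β)
    (hfb : BddAbove (range fun x => ‖f x‖)) (hlip : PtwiseLipschitzAt f β y) {l : ℝ}
    (hl : 0 < l) :
    PtwiseLipschitzAt (fun z : Y => ‖z‖ • f (sphereProj y₀ z)) (2 * β + ⨆ x, ‖f x‖)
      (l • (y : Y)) := by
  set M := ⨆ x, ‖f x‖
  have hM (x) : ‖f x‖ ≤ M := le_ciSup hfb x
  have hM0 : 0 ≤ M := (norm_nonneg _).trans (hM y)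
  convert hlip.of_eventually_forall_exists hβ hl.le (k := 2 / l) (by positivity) hM0 ?_ using 2
  · field_simp
  set z := l • (y : Y) with hz
  have hly : ‖z‖ = l := by
    rw [hz, norm_smul, norm_eq_of_mem_sphere y, mul_one, Real.norm_of_nonneg hl.le]
  have hz0 : z ≠ 0 := norm_pos_iff.1 (by rwa [hly])
  have hproj : sphereProj y₀ z = y := sphereProj_smul_of_pos y₀ y hl
  filter_upwards [Ioo_mem_nhdsGT hl] with r ⟨hr0, hrl⟩ a ha
  rw [mem_closedBall, dist_comm] at ha
  have ha0 : a ≠ 0 := by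
    rintro rfl
    rw [dist_zero_right, hly] at ha
    linarith
  refine ⟨sphereProj y₀ a, ?_, ?_⟩
  · rw [mem_closedBall, dist_comm, ← hproj]
    calc dist (sphereProj y₀ z) (sphereProj y₀ a) ≤ 2 * dist z a / ‖z‖ :=
          dist_sphereProj_le y₀ hz0 ha0
      _ ≤ 2 / l * r := by rw [hly, div_mul_eq_mul_div]; gcongr
  · calc dist (‖z‖ • f (sphereProj y₀ z)) (‖a‖ • f (sphereProj y₀ a))
        ≤ ‖z‖ * dist (f (sphereProj y₀ z)) (f (sphereProj y₀ a))
          + dist z a * ‖f (sphereProj y₀ a)‖ := dist_norm_smul_norm_smul_le _ _ _ _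
      _ ≤ l * dist (f y) (f (sphereProj y₀ a)) + M * r := by
        rw [hly, hproj, mul_comm M]
        gcongr
        exact hM _

end Homogenization

/-- The positively homogeneous extension of a bounded continuous sphere-valued-domain map
that is pointwise `β`-Lipschitz at `y` is continuous and pointwise
`(2β + ‖f‖_∞)`-Lipschitz on the open ray through `y`. -/
theorem stmt10 {Y X : Type*} [NormedAddCommGroup Y] [NormedSpace ℝ Y]
    [NormedAddCommGroup X] [NormedSpace ℝ X]
    (y : Metric.sphere (0 : Y) 1) (β : ℝ) (hβ : 0 < β)
    (f : Metric.sphere (0 : Y) 1 → X) (hfc : Continuous f)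
    (hfb : BddAbove (Set.range fun x => ‖f x‖))
    (hlip : PtwiseLipschitzAt f β y)
    (ρ : Y → X) (hρ0 : ρ 0 = 0)
    (hρ : ∀ z : Y, z ≠ 0 → ∀ w : Metric.sphere (0 : Y) 1,
      (w : Y) = ‖z‖⁻¹ • z → ρ z = ‖z‖ • f w) :
    Continuous ρ ∧
      ∀ z : Y, (∃ l : ℝ, 0 < l ∧ z = l • (y : Y)) →
        PtwiseLipschitzAt ρ (2 * β + ⨆ x, ‖f x‖) z := by
  have hρ_eq : ρ = fun z => ‖z‖ • f (sphereProj y z) := by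
    funext z
    rcases eq_or_ne z 0 with rfl | hz
    · rw [hρ0, norm_zero, zero_smul]
    · exact hρ z hz _ (coe_sphereProj y hz)
  subst hρ_eq
  refine ⟨continuous_norm_smul_comp_sphereProj y hfc hfb, ?_⟩
  rintro _ ⟨l, hl, rfl⟩
  exact ptwiseLipschitzAt_norm_smul_comp_sphereProj y hβ.le hfb hlip hl
end

section
/- Let X be a normed space, α ≥ 0, x ∈ X, and let G ⊆ X be a convex set such that for every ε > 0 the set G ∩ { z ∈ X : ‖z − x‖ ≤ α + ε } is non-empty. If U ⊆ X is open and ε₀ > 0 are such that G ∩ { z ∈ X : ‖z − x‖ ≤ α + ε₀ } ∩ U is non-empty, then G ∩ { z ∈ X : ‖z − x‖ < α + ε₀ } ∩ U is also non-empty. -/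
open Metric Set

/-- Lemma on convex sets meeting shrinking balls: if a convex set `G` meets each closed
ball of radius `α + ε` about `x`, and meets the closed ball of radius `α + ε₀` within an
open set `U`, then it meets the corresponding open ball within `U`. -/
theorem stmt11 {X : Type*} [NormedAddCommGroup X] [NormedSpace ℝ X]
    (α : ℝ) (hα : 0 ≤ α) (x : X) (G : Set X) (hG : Convex ℝ G)
    (h : ∀ ε : ℝ, 0 < ε → (G ∩ {z : X | ‖z - x‖ ≤ α + ε}).Nonempty)
    (U : Set X) (hU : IsOpen U) (ε₀ : ℝ) (hε₀ : 0 < ε₀)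
    (hne : (G ∩ {z : X | ‖z - x‖ ≤ α + ε₀} ∩ U).Nonempty) :
    (G ∩ {z : X | ‖z - x‖ < α + ε₀} ∩ U).Nonempty := by
  obtain ⟨y, ⟨hyG, hyB⟩, hyU⟩ := hne
  simp only [mem_setOf_eq] at hyB
  rcases lt_or_eq_of_le hyB with hlt | heq
  · exact ⟨y, ⟨hyG, hlt⟩, hyU⟩
  obtain ⟨δ, hδ, hball⟩ := Metric.isOpen_iff.mp hU y hyU
  obtain ⟨w, hwG, hwB⟩ := h (ε₀ / 2) (by linarith)
  simp only [mem_setOf_eq] at hwB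
  set t : ℝ := min (δ / (2 * (‖w - y‖ + 1))) (1 / 2) with ht
  have hwy : 0 < ‖w - y‖ + 1 := by positivity
  have ht0 : 0 < t := lt_min (by positivity) (by norm_num)
  have ht1 : t ≤ 1 / 2 := min_le_right _ _
  have ht1' : t < 1 := by linarith
  set z : X := (1 - t) • y + t • w with hz
  have hzG : z ∈ G := hG hyG hwG (by linarith) (le_of_lt ht0) (by ring)
  refine ⟨z, ⟨hzG, ?_⟩, hball ?_⟩
  · show ‖z - x‖ < α + ε₀
    have : z - x = (1 - t) • (y - x) + t • (w - x) := by
      rw [hz]; module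
    calc ‖z - x‖ ≤ (1 - t) * ‖y - x‖ + t * ‖w - x‖ := by
          rw [this]
          refine (norm_add_le _ _).trans ?_
          rw [norm_smul, norm_smul, Real.norm_eq_abs, Real.norm_eq_abs,
            abs_of_nonneg (by linarith), abs_of_nonneg ht0.le]
      _ ≤ (1 - t) * (α + ε₀) + t * (α + ε₀ / 2) := by
          have h4 : ‖y - x‖ ≤ α + ε₀ := le_of_eq heq
          nlinarith [norm_nonneg (w - x), norm_nonneg (y - x)]
      _ = α + ε₀ - t * (ε₀ / 2) := by ring
      _ < α + ε₀ := by nlinarith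
  · show z ∈ Metric.ball y δ
    rw [mem_ball_iff_norm]
    have : z - y = t • (w - y) := by rw [hz]; module
    rw [this, norm_smul, Real.norm_eq_abs, abs_of_nonneg ht0.le]
    have h1 : t ≤ δ / (2 * (‖w - y‖ + 1)) := min_le_left _ _
    have h2 : t * ‖w - y‖ ≤ δ / (2 * (‖w - y‖ + 1)) * ‖w - y‖ := by
      gcongr
    have h3 : δ / (2 * (‖w - y‖ + 1)) * ‖w - y‖ < δ := by
      rw [div_mul_eq_mul_div, div_lt_iff₀ (by positivity)]
      nlinarith [norm_nonneg (w - y)]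
    linarith
end

section
/- Let (M,d) be a metric space, X a normed space, α ≥ 0 and a ∈ M. Let φ : M ⇉ X be a convex-valued lower hemicontinuous correspondence that is lower pointwise (α+ε)-Lipschitz at a for every ε > 0. Then for every y ∈ φ(a) and every ε > 0, the correspondence ψ : M ⇉ X defined by ψ(b) := φ(b) ∩ { x ∈ X : ‖x − y‖ ≤ (α+ε)·d(a,b) } is lower hemicontinuous; moreover ψ is convex-valued and non-empty-valued. -/
open Filter Metric Set

/-- Lower hemicontinuity of a correspondence `φ : M ⇉ X`. -/
def LowerHemicontinuousCorr {M X : Type*} [TopologicalSpace M] [TopologicalSpace X]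
    (φ : M → Set X) : Prop :=
  ∀ a : M, ∀ U : Set X, IsOpen U → (φ a ∩ U).Nonempty →
    ∃ V : Set M, IsOpen V ∧ a ∈ V ∧ ∀ v ∈ V, (φ v ∩ U).Nonempty

/-- `φ` is lower pointwise `l`-Lipschitz at `b`. -/
def LowerPtwiseLipschitzAt {M X : Type*} [MetricSpace M] [NormedAddCommGroup X]
    (φ : M → Set X) (l : ℝ) (b : M) : Prop :=
  ∀ y ∈ φ b, ∀ a : M, (φ a ∩ {x : X | ‖x - y‖ ≤ l * dist b a}).Nonempty

/-- `φ` is lower pointwise `l`-Lipschitz. -/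
def LowerPtwiseLipschitz {M X : Type*} [MetricSpace M] [NormedAddCommGroup X]
    (φ : M → Set X) (l : ℝ) : Prop :=
  ∀ b : M, LowerPtwiseLipschitzAt φ l b

/-! Away from `a`, the correspondence `b ↦ φ b ∩ ball y ((α + ε) d(a,b))` with the strict
inequality is lower hemicontinuous, being the trace of `φ` on an open subset of `M × X`. The
`(α + ε/2)`-Lipschitz bound gives a point of `φ b` strictly inside the ball, so by convexity the
strict sets are dense in the non-strict ones, and density transfers lower hemicontinuity. At `a`
itself the set collapses to `{y}`, and lower hemicontinuity follows because the radii
`(α + ε) d(a,b)` shrink to `0`. -/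

open Topology

section LowerHemicontinuity

variable {M X : Type*} [TopologicalSpace M] [TopologicalSpace X]

def LowerHemicontinuousCorrAt (φ : M → Set X) (b : M) : Prop :=
  ∀ U : Set X, IsOpen U → (φ b ∩ U).Nonempty → ∀ᶠ v in 𝓝 b, (φ v ∩ U).Nonempty

theorem lowerHemicontinuousCorr_iff_forall_at {φ : M → Set X} :
    LowerHemicontinuousCorr φ ↔ ∀ b, LowerHemicontinuousCorrAt φ b := by
  simp only [LowerHemicontinuousCorr, LowerHemicontinuousCorrAt, _root_.eventually_nhds_iff]
  grind

theorem LowerHemicontinuousCorrAt.inter_isOpen {φ : M → Set X} {b : M}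
    (hφ : LowerHemicontinuousCorrAt φ b) {G : Set (M × X)} (hG : IsOpen G) :
    LowerHemicontinuousCorrAt (fun v => φ v ∩ {x | (v, x) ∈ G}) b := by
  rintro U hU ⟨z, ⟨hzφ, hzG⟩, hzU⟩
  obtain ⟨V, W, hV, hW, hbV, hzW, hVW⟩ := isOpen_prod_iff.mp hG b z hzG
  filter_upwards [hφ (U ∩ W) (hU.inter hW) ⟨z, hzφ, hzU, hzW⟩, hV.mem_nhds hbV]
    with v ⟨x, hxφ, hxU, hxW⟩ hvV
  exact ⟨x, ⟨hxφ, hVW ⟨hvV, hxW⟩⟩, hxU⟩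

theorem LowerHemicontinuousCorrAt.of_subset_of_subset_closure {φ ψ : M → Set X} {b : M}
    (hφ : LowerHemicontinuousCorrAt φ b) (hφψ : ∀ v, φ v ⊆ ψ v) (hψ : ψ b ⊆ closure (φ b)) :
    LowerHemicontinuousCorrAt ψ b := by
  rintro U hU ⟨z, hzψ, hzU⟩
  have hφU : (φ b ∩ U).Nonempty := (closure_inter_open_nonempty_iff hU).mp ⟨z, hψ hzψ, hzU⟩
  exact (hφ U hU hφU).mono fun v ⟨x, hx, hxU⟩ => ⟨x, hφψ v hx, hxU⟩

end LowerHemicontinuity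

theorem lowerHemicontinuousCorrAt_of_subset_closedBall {M X : Type*} [TopologicalSpace M]
    [PseudoMetricSpace X] {ψ : M → Set X} {b : M} {y : X} {r : M → ℝ}
    (hne : ∀ v, (ψ v).Nonempty) (hψ : ∀ v, ψ v ⊆ closedBall y (r v))
    (hr : Tendsto r (𝓝 b) (𝓝 0)) : LowerHemicontinuousCorrAt ψ b := by
  rintro U hU ⟨z, hzψ, hzU⟩
  have hrb : r b = 0 :=
    tendsto_nhds_unique (tendsto_pure_nhds r b) (hr.mono_left (pure_le_nhds b))
  obtain ⟨ρ, hρ, hρU⟩ := Metric.isOpen_iff.mp hU z hzU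
  filter_upwards [hr.eventually (eventually_lt_nhds hρ)] with v hv
  obtain ⟨x, hx⟩ := hne v
  refine ⟨x, hx, hρU ?_⟩
  have hxy := mem_closedBall.mp (hψ v hx)
  have hzy := mem_closedBall.mp (hψ b hzψ)
  calc dist x z ≤ dist x y + dist z y := dist_triangle_right x z y
    _ < ρ := by linarith

theorem Convex.inter_closedBall_subset_closure_inter_ball {E : Type*} [NormedAddCommGroup E]
    [NormedSpace ℝ E] {C : Set E} (hC : Convex ℝ C) {p y : E} {r : ℝ} (hpC : p ∈ C)
    (hpr : p ∈ ball y r) : C ∩ closedBall y r ⊆ closure (C ∩ ball y r) := by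
  rintro x ⟨hxC, hxr⟩
  have hseg : openSegment ℝ p x ⊆ C ∩ ball y r := by
    refine subset_inter (hC.openSegment_subset hpC hxC) ?_
    have hr : r ≠ 0 := (pos_of_mem_ball hpr).ne'
    rw [← interior_closedBall y hr] at hpr ⊢
    exact (convex_closedBall y r).openSegment_interior_self_subset_interior hpr hxr
  exact closure_mono hseg (segment_subset_closure_openSegment (right_mem_segment ℝ p x))

theorem stmt12_general {M X : Type*} [MetricSpace M] [NormedAddCommGroup X] [NormedSpace ℝ X]
    (α : ℝ) (a : M) (φ : M → Set X)
    (hcv : ∀ b, Convex ℝ (φ b)) (hlh : LowerHemicontinuousCorr φ)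
    (hlip : ∀ ε : ℝ, 0 < ε → LowerPtwiseLipschitzAt φ (α + ε) a)
    (y : X) (hy : y ∈ φ a) (ε : ℝ) (hε : 0 < ε) :
    LowerHemicontinuousCorr (fun b => φ b ∩ {x : X | ‖x - y‖ ≤ (α + ε) * dist a b}) ∧
    (∀ b, Convex ℝ (φ b ∩ {x : X | ‖x - y‖ ≤ (α + ε) * dist a b})) ∧
    (∀ b, (φ b ∩ {x : X | ‖x - y‖ ≤ (α + ε) * dist a b}).Nonempty) := by
  have hball : ∀ R, {x : X | ‖x - y‖ ≤ R} = closedBall y R := fun R => by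
    ext; simp [dist_eq_norm]
  have hne : ∀ δ > 0, ∀ b, (φ b ∩ closedBall y ((α + δ) * dist a b)).Nonempty :=
    fun δ hδ b => by simpa only [hball] using hlip δ hδ y hy b
  simp only [hball]
  refine ⟨?_, fun b => (hcv b).inter (convex_closedBall y _), hne ε hε⟩
  rw [lowerHemicontinuousCorr_iff_forall_at]
  intro b
  rcases eq_or_ne b a with rfl | hba
  · refine lowerHemicontinuousCorrAt_of_subset_closedBall (hne ε hε)
      (fun v => inter_subset_right) ?_
    have hr : Continuous fun v => (α + ε) * dist b v := by fun_prop
    simpa using hr.tendsto b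
  · have hD : 0 < dist a b := dist_pos.2 hba.symm
    obtain ⟨p, hpφ, hp⟩ := hne (ε / 2) (half_pos hε) b
    have hpr : p ∈ ball y ((α + ε) * dist a b) :=
      mem_ball.2 <| (mem_closedBall.1 hp).trans_lt (mul_lt_mul_of_pos_right (by linarith) hD)
    have hG : IsOpen {q : M × X | dist q.2 y < (α + ε) * dist a q.1} :=
      isOpen_lt (continuous_snd.dist continuous_const)
        (continuous_const.mul (continuous_const.dist continuous_fst))
    have hψ : LowerHemicontinuousCorrAt (fun v => φ v ∩ ball y ((α + ε) * dist a v)) b :=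
      (lowerHemicontinuousCorr_iff_forall_at.mp hlh b).inter_isOpen hG
    exact hψ.of_subset_of_subset_closure
      (fun v => inter_subset_inter_right _ ball_subset_closedBall)
      ((hcv b).inter_closedBall_subset_closure_inter_ball hpφ hpr)

/-- If `φ` is a convex-valued lower hemicontinuous correspondence that is lower pointwise
`(α+ε)`-Lipschitz at `a` for every `ε > 0`, then for `y ∈ φ a` and `ε > 0` the
correspondence `b ↦ φ b ∩ closedBall y ((α+ε)·d(a,b))` is lower hemicontinuous,
convex-valued and non-empty-valued. -/
theorem stmt12 {M X : Type*} [MetricSpace M] [NormedAddCommGroup X] [NormedSpace ℝ X]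
    (α : ℝ) (hα : 0 ≤ α) (a : M) (φ : M → Set X)
    (hcv : ∀ b, Convex ℝ (φ b)) (hlh : LowerHemicontinuousCorr φ)
    (hlip : ∀ ε : ℝ, 0 < ε → LowerPtwiseLipschitzAt φ (α + ε) a)
    (y : X) (hy : y ∈ φ a) (ε : ℝ) (hε : 0 < ε) :
    LowerHemicontinuousCorr (fun b => φ b ∩ {x : X | ‖x - y‖ ≤ (α + ε) * dist a b}) ∧
    (∀ b, Convex ℝ (φ b ∩ {x : X | ‖x - y‖ ≤ (α + ε) * dist a b})) ∧
    (∀ b, (φ b ∩ {x : X | ‖x - y‖ ≤ (α + ε) * dist a b}).Nonempty) :=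
  stmt12_general α a φ hcv hlh hlip y hy ε hε
end

section
/- Let (M,d) be a metric space, X a Banach space and α ≥ 0. Let φ : M ⇉ X be a closed-valued and convex-valued lower hemicontinuous correspondence that is lower pointwise (α+ε)-Lipschitz for every ε > 0. Then for every ε > 0, every b ∈ M and every y ∈ φ(b), there exists a continuous selection f : M → X of φ with f(b) = y such that ‖f(b) − f(a)‖ ≤ (α+ε)·d(b,a) for all a ∈ M. -/
open Filter Metric Set

/-!
Apply Michael's selection theorem to `ψ a = φ a ∩ closedBall y ((α + ε) * dist b a)`; since
`ψ b = {y}`, the selection passes through `y` at `b` with the required slope. The values of `ψ`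
are nonempty by the `(α + ε/2)`-Lipschitz property. `ψ` is lower hemicontinuous at `b` by that
property again; at `a ≠ b` every point of `ψ a` is approached, along a segment towards a point at
distance `≤ (α + ε/2) * dist b a` from `y`, by points of `φ a ∩ ball y ((α + ε) * dist b a)`, and
cutting `φ` with this open ball keeps it lower hemicontinuous because the constraint has open graph.

Michael's theorem itself: partitions of unity give continuous `2⁻ⁿ`-approximate selections, each
within `2⁻ⁿ + 2⁻ⁿ⁻¹` of the previous one; their uniform limit is a selection since the values are
closed.
-/

open Topology

theorem lowerHemicontinuousCorr_iff {M X : Type*} [TopologicalSpace M] [TopologicalSpace X]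
    {φ : M → Set X} : LowerHemicontinuousCorr φ ↔ LowerHemicontinuous φ := by
  simp only [LowerHemicontinuousCorr, lowerHemicontinuous_iff, lowerHemicontinuousAt_iff,
    _root_.eventually_nhds_iff]
  refine forall_congr' fun a => forall₂_congr fun U _ => imp_congr_right fun _ => ?_
  exact exists_congr fun V => by tauto

theorem tendstoUniformly_of_dist_le_geometric {ι X : Type*} [PseudoMetricSpace X]
    [CompleteSpace X] {s : ℕ → ι → X} {C r : ℝ} (hr₀ : 0 ≤ r) (hr₁ : r < 1)
    (h : ∀ n a, dist (s n a) (s (n + 1) a) ≤ C * r ^ n) : ∃ f, TendstoUniformly s f atTop := by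
  choose f hf using fun a =>
    cauchySeq_tendsto_of_complete (cauchySeq_of_le_geometric r C hr₁ (h · a))
  refine ⟨f, Metric.tendstoUniformly_iff.2 fun e he => ?_⟩
  have hbound : Tendsto (fun n => C * r ^ n / (1 - r)) atTop (𝓝 0) := by
    simpa using ((tendsto_pow_atTop_nhds_zero_of_lt_one hr₀ hr₁).const_mul C).div_const (1 - r)
  filter_upwards [hbound.eventually_lt_const he] with n hn a
  rw [dist_comm]
  exact (dist_le_of_le_geometric_of_tendsto r C hr₁ (h · a) (hf a) n).trans_lt hn

theorem IsClosed.mem_of_tendsto_of_mem_thickening {ι X : Type*} [PseudoEMetricSpace X]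
    {l : Filter ι} [l.NeBot] {s : Set X} {x : ι → X} {δ : ι → ℝ} {p : X} (hs : IsClosed s)
    (hx : Tendsto x l (𝓝 p)) (hδ : Tendsto δ l (𝓝 0)) (h : ∀ᶠ i in l, x i ∈ thickening (δ i) s) :
    p ∈ s := by
  rw [← hs.closure_eq, closure_eq_iInter_cthickening]
  refine mem_iInter₂.2 fun ε hε => isClosed_cthickening.mem_of_tendsto hx ?_
  filter_upwards [h, hδ.eventually_lt_const hε] with i hi hδi
  exact thickening_subset_cthickening _ _ (thickening_mono hδi.le _ hi)

theorem Convex.mem_closure_inter_ball {E : Type*} [NormedAddCommGroup E] [NormedSpace ℝ E]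
    {C : Set E} {x x' y : E} {R : ℝ} (hC : Convex ℝ C) (hx : x ∈ C) (hxR : x ∈ closedBall y R)
    (hx' : x' ∈ C) (hx'R : x' ∈ ball y R) : x ∈ closure (C ∩ ball y R) := by
  have hR : R ≠ 0 := (pos_of_mem_ball hx'R).ne'
  have hseg : openSegment ℝ x x' ⊆ C ∩ ball y R := by
    refine subset_inter (hC.openSegment_subset hx hx') ?_
    simpa only [isOpen_ball.interior_eq] using
      (convex_ball y R).openSegment_closure_interior_subset_interior
        (by rwa [closure_ball y hR]) (by rwa [isOpen_ball.interior_eq])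
  refine closure_mono hseg ?_
  rw [closure_openSegment]
  exact left_mem_segment ℝ x x'

def IsApproxSelection {M X : Type*} [TopologicalSpace M] [PseudoMetricSpace X]
    (ψ : M → Set X) (δ : ℝ) (g : M → X) : Prop :=
  Continuous g ∧ ∀ a, g a ∈ thickening δ (ψ a)

section Selection

variable {M X : Type*} [TopologicalSpace M] [NormedAddCommGroup X] [NormedSpace ℝ X]

namespace LowerHemicontinuous

variable [NormalSpace M] [ParacompactSpace M] {ψ : M → Set X}

theorem exists_isApproxSelection (hψ : LowerHemicontinuous ψ) (hne : ∀ a, (ψ a).Nonempty)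
    (hcv : ∀ a, Convex ℝ (ψ a)) {δ : ℝ} (hδ : 0 < δ) : ∃ g, IsApproxSelection ψ δ g := by
  have hlocal : ∀ a, ∃ c : X, ∀ᶠ v in 𝓝 a, c ∈ thickening δ (ψ v) := by
    intro a
    obtain ⟨c, hc⟩ := hne a
    refine ⟨c, (lowerHemicontinuousAt_iff.1 (hψ a) _ isOpen_ball ⟨c, hc, mem_ball_self hδ⟩).mono
      fun v ⟨z, hz, hzc⟩ => mem_thickening_iff.2 ⟨z, hz, mem_ball'.1 hzc⟩⟩
  obtain ⟨g, hg⟩ := exists_continuous_forall_mem_convex_of_local_const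
    (fun a => (hcv a).thickening δ) hlocal
  exact ⟨g, g.continuous, hg⟩

theorem exists_isApproxSelection_near (hψ : LowerHemicontinuous ψ) (hcv : ∀ a, Convex ℝ (ψ a))
    {g : M → X} {δ δ' : ℝ} (hg : IsApproxSelection ψ δ g) (hδ' : 0 < δ') :
    ∃ g', IsApproxSelection ψ δ' g' ∧ ∀ a, dist (g' a) (g a) < δ + δ' := by
  have hlhc : LowerHemicontinuous fun a => ψ a ∩ ball (g a) δ :=
    hψ.inter_hasOpenCGraph (isOpen_lt (continuous_snd.dist (hg.1.comp continuous_fst))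
      continuous_const : IsOpen {p : M × X | dist p.2 (g p.1) < δ})
  have hne : ∀ a, (ψ a ∩ ball (g a) δ).Nonempty := fun a => by
    obtain ⟨z, hz, hgz⟩ := mem_thickening_iff.1 (hg.2 a)
    exact ⟨z, hz, mem_ball'.2 hgz⟩
  obtain ⟨g', hg'c, hg'⟩ :=
    hlhc.exists_isApproxSelection hne (fun a => (hcv a).inter (convex_ball _ _)) hδ'
  refine ⟨g', ⟨hg'c, fun a => thickening_subset_of_subset δ' inter_subset_left (hg' a)⟩,
    fun a => ?_⟩
  obtain ⟨z, ⟨-, hz⟩, hg'z⟩ := mem_thickening_iff.1 (hg' a)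
  calc dist (g' a) (g a) ≤ dist (g' a) z + dist z (g a) := dist_triangle _ _ _
    _ < δ' + δ := add_lt_add hg'z hz
    _ = δ + δ' := add_comm _ _

theorem exists_seq_isApproxSelection (hψ : LowerHemicontinuous ψ) (hne : ∀ a, (ψ a).Nonempty)
    (hcv : ∀ a, Convex ℝ (ψ a)) :
    ∃ s : ℕ → M → X, (∀ n, IsApproxSelection ψ (2⁻¹ ^ n) (s n)) ∧
      ∀ n a, dist (s n a) (s (n + 1) a) ≤ 2 * 2⁻¹ ^ n := by
  obtain ⟨g₀, hg₀⟩ := hψ.exists_isApproxSelection hne hcv (δ := 2⁻¹ ^ 0) (by positivity)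
  choose! next hnext hdist using fun n (g : M → X) (hg : IsApproxSelection ψ (2⁻¹ ^ n) g) =>
    hψ.exists_isApproxSelection_near hcv hg (δ' := 2⁻¹ ^ (n + 1)) (by positivity)
  let s : ℕ → M → X := fun n => Nat.rec g₀ next n
  have hs : ∀ n, IsApproxSelection ψ (2⁻¹ ^ n) (s n) := by
    intro n
    induction n with
    | zero => exact hg₀
    | succ n ih => exact hnext n _ ih
  refine ⟨s, hs, fun n a => ?_⟩
  have hstep : dist (s (n + 1) a) (s n a) < 2⁻¹ ^ n + 2⁻¹ ^ n * 2⁻¹ := by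
    rw [← pow_succ]; exact hdist n _ (hs n) a
  have hpos : (0 : ℝ) < 2⁻¹ ^ n := by positivity
  rw [dist_comm]
  linarith

theorem exists_continuous_selection [CompleteSpace X] (hψ : LowerHemicontinuous ψ)
    (hne : ∀ a, (ψ a).Nonempty) (hcl : ∀ a, IsClosed (ψ a)) (hcv : ∀ a, Convex ℝ (ψ a)) :
    ∃ f : M → X, Continuous f ∧ ∀ a, f a ∈ ψ a := by
  obtain ⟨s, hs, hdist⟩ := hψ.exists_seq_isApproxSelection hne hcv
  obtain ⟨f, hf⟩ := tendstoUniformly_of_dist_le_geometric (by norm_num) (by norm_num) hdist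
  refine ⟨f, hf.continuous (Frequently.of_forall fun n => (hs n).1), fun a => ?_⟩
  exact (hcl a).mem_of_tendsto_of_mem_thickening (hf.tendsto_at a)
    (tendsto_pow_atTop_nhds_zero_of_lt_one (by norm_num) (by norm_num))
    (Eventually.of_forall fun n => (hs n).2 a)

end LowerHemicontinuous

end Selection

section LowerPtwiseLipschitz

variable {M X : Type*} [MetricSpace M] [NormedAddCommGroup X] {φ : M → Set X} {l : ℝ} {b : M}
  {y : X}

theorem LowerPtwiseLipschitzAt.exists_dist_le (hlip : LowerPtwiseLipschitzAt φ l b)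
    (hy : y ∈ φ b) (a : M) : ∃ x ∈ φ a, dist x y ≤ l * dist b a := by
  obtain ⟨x, hx, hxy⟩ := hlip y hy a
  exact ⟨x, hx, by rwa [dist_eq_norm]⟩

theorem LowerHemicontinuous.inter_closedBall_of_lowerPtwiseLipschitzAt [NormedSpace ℝ X]
    {l' : ℝ} (hφ : LowerHemicontinuous φ) (hcv : ∀ a, Convex ℝ (φ a))
    (hlip : LowerPtwiseLipschitzAt φ l b) (hy : y ∈ φ b) (hll' : l < l') :
    LowerHemicontinuous fun a => φ a ∩ closedBall y (l' * dist b a) := by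
  have hopen : LowerHemicontinuous fun a => φ a ∩ ball y (l' * dist b a) :=
    hφ.inter_hasOpenCGraph (isOpen_lt (by fun_prop) (by fun_prop) :
      IsOpen {p : M × X | dist p.2 y < l' * dist b p.1})
  refine lowerHemicontinuous_iff.2 fun a => lowerHemicontinuousAt_iff.2 ?_
  rintro U hU ⟨x, ⟨hxφ, hxy⟩, hxU⟩
  obtain rfl | hab := eq_or_ne b a
  · obtain rfl : x = y := by simpa using hxy
    obtain ⟨r, hr, hrU⟩ := Metric.isOpen_iff.1 hU x hxU
    have hsmall : ∀ᶠ v in 𝓝 b, l * dist b v < r := by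
      have : Tendsto (fun v => l * dist b v) (𝓝 b) (𝓝 0) := by
        simpa using ((continuous_const (y := b)).dist continuous_id |>.const_mul l).tendsto b
      exact this.eventually_lt_const hr
    filter_upwards [hsmall] with v hv
    obtain ⟨z, hzφ, hz⟩ := hlip.exists_dist_le hxφ v
    exact ⟨z, ⟨hzφ, hz.trans (mul_le_mul_of_nonneg_right hll'.le dist_nonneg)⟩,
      hrU (hz.trans_lt hv)⟩
  · obtain ⟨x', hx'φ, hx'y⟩ := hlip.exists_dist_le hy a
    have hx'R : x' ∈ ball y (l' * dist b a) :=
      hx'y.trans_lt (mul_lt_mul_of_pos_right hll' (dist_pos.2 hab))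
    obtain ⟨x'', hx''U, hx''⟩ :=
      mem_closure_iff.1 ((hcv a).mem_closure_inter_ball hxφ hxy hx'φ hx'R) U hU hxU
    filter_upwards [lowerHemicontinuousAt_iff.1 (hopen a) U hU ⟨x'', hx'', hx''U⟩]
      with v ⟨z, ⟨hzφ, hz⟩, hzU⟩
    exact ⟨z, ⟨hzφ, ball_subset_closedBall hz⟩, hzU⟩

end LowerPtwiseLipschitz

theorem stmt13_general {M X : Type*} [MetricSpace M] [NormedAddCommGroup X] [NormedSpace ℝ X]
    [CompleteSpace X] (α : ℝ) (φ : M → Set X)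
    (hcl : ∀ a, IsClosed (φ a)) (hcv : ∀ a, Convex ℝ (φ a))
    (hlh : LowerHemicontinuousCorr φ)
    (hlip : ∀ ε : ℝ, 0 < ε → LowerPtwiseLipschitz φ (α + ε))
    (ε : ℝ) (hε : 0 < ε) (b : M) (y : X) (hy : y ∈ φ b) :
    ∃ f : M → X, Continuous f ∧ (∀ a, f a ∈ φ a) ∧ f b = y ∧
      ∀ a : M, ‖f b - f a‖ ≤ (α + ε) * dist b a := by
  have hlipb : LowerPtwiseLipschitzAt φ (α + ε / 2) b := hlip (ε / 2) (half_pos hε) b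
  have hψ := (lowerHemicontinuousCorr_iff.1 hlh).inter_closedBall_of_lowerPtwiseLipschitzAt hcv
    hlipb hy (by linarith : α + ε / 2 < α + ε)
  have hne : ∀ a, (φ a ∩ closedBall y ((α + ε) * dist b a)).Nonempty := fun a => by
    obtain ⟨x, hx, hxy⟩ := hlipb.exists_dist_le hy a
    exact ⟨x, hx, hxy.trans (mul_le_mul_of_nonneg_right (by linarith) dist_nonneg)⟩
  obtain ⟨f, hfc, hf⟩ := hψ.exists_continuous_selection hne
    (fun a => (hcl a).inter isClosed_closedBall) (fun a => (hcv a).inter (convex_closedBall _ _))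
  have hfb : f b = y := by simpa using (hf b).2
  refine ⟨f, hfc, fun a => (hf a).1, hfb, fun a => ?_⟩
  rw [hfb, ← dist_eq_norm, dist_comm]
  exact (hf a).2

/-- A closed- and convex-valued lower hemicontinuous correspondence that is lower pointwise
`(α+ε)`-Lipschitz for every `ε > 0` admits strongly pointwise `(α+ε)`-Lipschitz
selections. -/
theorem stmt13 {M X : Type*} [MetricSpace M] [NormedAddCommGroup X] [NormedSpace ℝ X]
    [CompleteSpace X] (α : ℝ) (hα : 0 ≤ α) (φ : M → Set X)
    (hcl : ∀ a, IsClosed (φ a)) (hcv : ∀ a, Convex ℝ (φ a))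
    (hlh : LowerHemicontinuousCorr φ)
    (hlip : ∀ ε : ℝ, 0 < ε → LowerPtwiseLipschitz φ (α + ε))
    (ε : ℝ) (hε : 0 < ε) (b : M) (y : X) (hy : y ∈ φ b) :
    ∃ f : M → X, Continuous f ∧ (∀ a, f a ∈ φ a) ∧ f b = y ∧
      ∀ a : M, ‖f b - f a‖ ≤ (α + ε) * dist b a :=
  stmt13_general α φ hcl hcv hlh hlip ε hε b y hy
end
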